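/- arXiv:2012.09391 — 9 statements merged into one kernel-verified Lean document; each statement's English description precedes it below -/
import Mathlib

section
/- Let Γ be a graph whose adjacency matrix has smallest eigenvalue at least -m (with m ≥ 1), and suppose Γ contains H(a,t) as an induced subgraph (a, t positive integers). Then (a - m(m-1))·(t - (m-1)²) ≤ (m(m-1))². -/
open Matrix

/-- Quadratic form of the adjacency matrix for a vector supported on a clique `s`
together with one extra vertex `x`. -/
private lemma hat_quadform_clique {V : Type*} [Fintype V] [DecidableEq V]
    (G : SimpleGraph V) [DecidableRel G.Adj]
    (s : Finset V) (x : V) (hx : x ∉ s)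
    (hclique : G.IsClique (s : Set V))
    (v : V → ℝ) (hv0 : ∀ y, y ≠ x → y ∉ s → v y = 0) :
    v ⬝ᵥ (G.adjMatrix ℝ *ᵥ v) =
      (∑ z ∈ s, if G.Adj x z then v x * v z else 0)
      + (∑ y ∈ s, if G.Adj y x then v y * v x else 0)
      + ((∑ z ∈ s, v z) ^ 2 - ∑ z ∈ s, v z ^ 2) := by
  have hsupp : ∀ y, y ∉ insert x s → v y = 0 := by
    intro y hy
    simp only [Finset.mem_insert, not_or] at hy
    exact hv0 y hy.1 hy.2
  have step1 : v ⬝ᵥ (G.adjMatrix ℝ *ᵥ v)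
      = ∑ y ∈ Finset.univ, ∑ z ∈ Finset.univ, (if G.Adj y z then v y * v z else 0) := by
    simp only [dotProduct, Matrix.mulVec, SimpleGraph.adjMatrix_apply, Finset.mul_sum]
    refine Finset.sum_congr rfl fun y _ => Finset.sum_congr rfl fun z _ => ?_
    by_cases h : G.Adj y z <;> simp [h, mul_comm]
  have step2 : v ⬝ᵥ (G.adjMatrix ℝ *ᵥ v)
      = ∑ y ∈ insert x s, ∑ z ∈ insert x s, (if G.Adj y z then v y * v z else 0) := by
    rw [step1]
    rw [← Finset.sum_subset (Finset.subset_univ (insert x s)) (fun y _ hy => by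
      apply Finset.sum_eq_zero; intro z _
      rw [hsupp y hy]; simp)]
    refine Finset.sum_congr rfl fun y _ => ?_
    rw [← Finset.sum_subset (Finset.subset_univ (insert x s)) (fun z _ hz => by
      rw [hsupp z hz]; simp)]
  rw [step2, Finset.sum_insert hx]
  rw [Finset.sum_insert hx]
  have hxx : (if G.Adj x x then v x * v x else 0) = 0 := by simp
  rw [hxx, zero_add]
  have inner : ∀ y ∈ s, ∑ z ∈ insert x s, (if G.Adj y z then v y * v z else 0)
      = (if G.Adj y x then v y * v x else 0) + (v y * (∑ z ∈ s, v z) - v y ^ 2) := by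
    intro y hy
    rw [Finset.sum_insert hx]
    congr 1
    have : ∀ z ∈ s, (if G.Adj y z then v y * v z else 0)
        = v y * v z - (if z = y then v y * v z else 0) := by
      intro z hz
      by_cases h : z = y
      · subst h; simp [G.irrefl]
      · have hadj : G.Adj y z := hclique hy hz (Ne.symm h)
        simp [h, hadj]
    rw [Finset.sum_congr rfl this, Finset.sum_sub_distrib,
      Finset.sum_ite_eq' s y (fun z => v y * v z)]
    simp [hy, Finset.mul_sum, pow_two]
  rw [Finset.sum_congr rfl inner, Finset.sum_add_distrib, Finset.sum_sub_distrib]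
  rw [← Finset.sum_mul, ← pow_two]
  ring

set_option maxHeartbeats 1000000 in
/-- If a graph `Γ` has all adjacency eigenvalues at least `-m` (with `m ≥ 1`) and contains
`H(a,t)` as an induced subgraph (a clique of order `a+t` together with a vertex `x` outside
it adjacent to exactly `a` of its vertices, `a, t ≥ 1`), then
`(a - m(m-1))·(t - (m-1)²) ≤ (m(m-1))²`. -/
theorem hat_subgraph_bound {V : Type*} [Fintype V] [DecidableEq V]
    (G : SimpleGraph V) [DecidableRel G.Adj] (m : ℝ) (hm : 1 ≤ m)
    (hspec : ∀ x ∈ spectrum ℝ (G.adjMatrix ℝ), -m ≤ x)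
    (a t : ℕ) (ha : 1 ≤ a) (ht : 1 ≤ t)
    (s : Finset V) (x : V) (hx : x ∉ s)
    (hclique : G.IsClique (s : Set V)) (hcard : s.card = a + t)
    (hnbr : (s.filter (fun y => G.Adj x y)).card = a) :
    ((a : ℝ) - m * (m - 1)) * ((t : ℝ) - (m - 1) ^ 2) ≤ (m * (m - 1)) ^ 2 := by
  -- the shifted matrix A + m·1 is positive semidefinite
  have hpsd : (G.adjMatrix ℝ + algebraMap ℝ (Matrix V V ℝ) m).PosSemidef := by
    have hA : (G.adjMatrix ℝ).IsHermitian := by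
      ext i j
      simp [Matrix.conjTranspose_apply, SimpleGraph.adjMatrix_apply, G.adj_comm]
    have halg : (algebraMap ℝ (Matrix V V ℝ) m).IsHermitian := by
      rw [Algebra.algebraMap_eq_smul_one]
      ext i j
      simp only [Matrix.conjTranspose_apply, Matrix.smul_apply, Matrix.one_apply, star_trivial]
      by_cases h : i = j <;> simp [h, eq_comm]
    have hM : (G.adjMatrix ℝ + algebraMap ℝ (Matrix V V ℝ) m).IsHermitian := hA.add halg
    apply hM.posSemidef_iff_eigenvalues_nonneg.mpr
    intro i
    have hmem := hM.eigenvalues_mem_spectrum_real i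
    rw [← spectrum.add_singleton_eq] at hmem
    obtain ⟨u, hu, w, hw, huw⟩ := Set.mem_add.mp hmem
    have := hspec u hu
    simp only [Set.mem_singleton_iff] at hw
    subst hw
    rw [Pi.zero_apply]
    linarith [huw]
  -- the test vector
  set B : ℝ := (t : ℝ) + m - 1 with hB
  set c : ℝ := -((a : ℝ) * B) with hc
  set p : ℝ := m * B with hp
  set q : ℝ := -(m * (a : ℝ)) with hq
  set v : V → ℝ := fun y => if y = x then c
      else if y ∈ s then (if G.Adj x y then p else q) else 0 with hv
  have hvx : v x = c := by simp [hv]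
  have hvN : ∀ y ∈ s, G.Adj x y → v y = p := by
    intro y hy hadj
    have : y ≠ x := fun h => hx (h ▸ hy)
    simp [hv, this, hy, hadj]
  have hvB : ∀ y ∈ s, ¬G.Adj x y → v y = q := by
    intro y hy hadj
    have : y ≠ x := fun h => hx (h ▸ hy)
    simp [hv, this, hy, hadj]
  have hv0 : ∀ y, y ≠ x → y ∉ s → v y = 0 := by intro y h1 h2; simp [hv, h1, h2]
  -- sums over the clique
  have hcardnot : (s.filter (fun y => ¬ G.Adj x y)).card = t := by
    have := Finset.card_filter_add_card_filter_not (s := s) (p := fun y => G.Adj x y)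
    rw [hnbr, hcard] at this
    omega
  have e1 : ∑ z ∈ s.filter (fun y => G.Adj x y), v z = (a : ℝ) * p := by
    rw [Finset.sum_congr rfl (fun z hz =>
          hvN z (Finset.mem_filter.mp hz).1 (Finset.mem_filter.mp hz).2),
        Finset.sum_const, hnbr, nsmul_eq_mul]
  have e2 : ∑ z ∈ s.filter (fun y => ¬ G.Adj x y), v z = (t : ℝ) * q := by
    rw [Finset.sum_congr rfl (fun z hz =>
          hvB z (Finset.mem_filter.mp hz).1 (Finset.mem_filter.mp hz).2),
        Finset.sum_const, hcardnot, nsmul_eq_mul]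
  have e1' : ∑ z ∈ s.filter (fun y => G.Adj x y), v z ^ 2 = (a : ℝ) * p ^ 2 := by
    rw [Finset.sum_congr rfl (fun z hz => by
          rw [hvN z (Finset.mem_filter.mp hz).1 (Finset.mem_filter.mp hz).2]),
        Finset.sum_const, hnbr, nsmul_eq_mul]
  have e2' : ∑ z ∈ s.filter (fun y => ¬ G.Adj x y), v z ^ 2 = (t : ℝ) * q ^ 2 := by
    rw [Finset.sum_congr rfl (fun z hz => by
          rw [hvB z (Finset.mem_filter.mp hz).1 (Finset.mem_filter.mp hz).2]),
        Finset.sum_const, hcardnot, nsmul_eq_mul]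
  have hS1 : ∑ z ∈ s, v z = (a : ℝ) * p + (t : ℝ) * q := by
    rw [← Finset.sum_filter_add_sum_filter_not s (fun z => G.Adj x z), e1, e2]
  have hS2 : ∑ z ∈ s, v z ^ 2 = (a : ℝ) * p ^ 2 + (t : ℝ) * q ^ 2 := by
    rw [← Finset.sum_filter_add_sum_filter_not s (fun z => G.Adj x z), e1', e2']
  -- cross sums with x
  have hcross1 : (∑ z ∈ s, if G.Adj x z then v x * v z else 0) = c * ((a : ℝ) * p) := by
    rw [← Finset.sum_filter, ← Finset.mul_sum, e1, hvx]
  have hcross2 : (∑ y ∈ s, if G.Adj y x then v y * v x else 0) = c * ((a : ℝ) * p) := by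
    have : ∀ y ∈ s, (if G.Adj y x then v y * v x else 0)
        = (if G.Adj x y then v x * v y else 0) := by
      intro y _
      by_cases h : G.Adj x y
      · simp [h, h.symm, mul_comm]
      · have h' : ¬ G.Adj y x := fun hh => h hh.symm
        simp [h, h']
    rw [Finset.sum_congr rfl this, hcross1]
  -- the quadratic form inequality
  have hQ := hat_quadform_clique G s x hx hclique v hv0
  have key := hpsd.dotProduct_mulVec_nonneg v
  rw [Matrix.add_mulVec] at key
  have halgv : (algebraMap ℝ (Matrix V V ℝ) m) *ᵥ v = m • v := by
    rw [Algebra.algebraMap_eq_smul_one, Matrix.smul_mulVec, Matrix.one_mulVec]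
  rw [halgv, dotProduct_add, dotProduct_smul, star_trivial] at key
  have hvv : v ⬝ᵥ v = c ^ 2 + ((a : ℝ) * p ^ 2 + (t : ℝ) * q ^ 2) := by
    have hsupp : ∀ y, y ∉ insert x s → v y = 0 := by
      intro y hy
      simp only [Finset.mem_insert, not_or] at hy
      exact hv0 y hy.1 hy.2
    rw [dotProduct]
    rw [← Finset.sum_subset (Finset.subset_univ (insert x s)) (fun y _ hy => by
      rw [hsupp y hy]; simp)]
    rw [Finset.sum_insert hx, hvx, ← hS2]
    rw [Finset.sum_congr rfl (fun z _ => (pow_two (v z)).symm)]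
    ring_nf
  rw [hQ, hcross1, hcross2, hvv, hS1, hS2, smul_eq_mul] at key
  -- final algebra
  have ha' : (1 : ℝ) ≤ (a : ℝ) := by exact_mod_cast ha
  have ht' : (1 : ℝ) ≤ (t : ℝ) := by exact_mod_cast ht
  have hB0 : 0 < B := by rw [hB]; linarith
  have hmaB : 0 < m * (a : ℝ) * B := by positivity
  rw [hc, hp, hq, hB] at key
  have h2 : (m * (a : ℝ) * ((t : ℝ) + m - 1)) *
      (-((a : ℝ) * (t : ℝ)) + (a : ℝ) * (m - 1) ^ 2 + m * (m - 1) * (t : ℝ) + m * (m - 1) ^ 2)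
      = -((a : ℝ) * ((t : ℝ) + m - 1)) * ((a : ℝ) * (m * ((t : ℝ) + m - 1)))
        + -((a : ℝ) * ((t : ℝ) + m - 1)) * ((a : ℝ) * (m * ((t : ℝ) + m - 1)))
        + (((a : ℝ) * (m * ((t : ℝ) + m - 1)) + (t : ℝ) * -(m * (a : ℝ))) ^ 2
            - ((a : ℝ) * (m * ((t : ℝ) + m - 1)) ^ 2 + (t : ℝ) * (-(m * (a : ℝ))) ^ 2))
        + m * ((-((a : ℝ) * ((t : ℝ) + m - 1))) ^ 2
            + ((a : ℝ) * (m * ((t : ℝ) + m - 1)) ^ 2 + (t : ℝ) * (-(m * (a : ℝ))) ^ 2)) := by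
    ring
  rw [← h2] at key
  have hmaB' : 0 < m * (a : ℝ) * ((t : ℝ) + m - 1) := by rw [hB] at hmaB; exact hmaB
  have hX : 0 ≤ -((a : ℝ) * (t : ℝ)) + (a : ℝ) * (m - 1) ^ 2 + m * (m - 1) * (t : ℝ)
      + m * (m - 1) ^ 2 := (mul_nonneg_iff_of_pos_left hmaB').mp key
  nlinarith [hX]
end

section
/- Let Γ be a graph with smallest adjacency eigenvalue -m such that any two non-adjacent vertices have at most μ common neighbors. Suppose Γ has a maximal clique C of order c ≥ (m-1)(4m-1) and a vertex y ∉ C with a neighbors in C. If μ < (c+m-1+√D)/2, where D = (c+m-1)(c-(m-1)(4m-1)), then a ≤ (c+m-1-√D)/2. -/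
open Matrix Pointwise Finset

/-- If `-m` is the least element of the spectrum of the adjacency matrix, then
`A + m•1` is positive semidefinite as a quadratic form. -/
lemma adj_psd_of_least {V : Type*} [Fintype V] [DecidableEq V]
    (G : SimpleGraph V) [DecidableRel G.Adj] (m : ℝ)
    (hspec : IsLeast (spectrum ℝ (G.adjMatrix ℝ)) (-m)) :
    ∀ x : V → ℝ, 0 ≤ x ⬝ᵥ ((G.adjMatrix ℝ + m • (1 : Matrix V V ℝ)) *ᵥ x) := by
  set A := G.adjMatrix ℝ with hA
  set B := G.adjMatrix ℝ + m • (1 : Matrix V V ℝ) with hB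
  have hBH : B.IsHermitian := by
    show Bᴴ = B
    rw [hB, Matrix.conjTranspose_add, Matrix.conjTranspose_smul]
    congr 1
    · ext i j
      simp [Matrix.conjTranspose_apply, G.adj_comm i j]
    · simp
  have hBpsd : B.PosSemidef := by
    apply (Matrix.IsHermitian.posSemidef_iff_eigenvalues_nonneg hBH).mpr
    intro i
    show (0:ℝ) ≤ _
    have h1 : Matrix.IsHermitian.eigenvalues hBH i ∈ spectrum ℝ B :=
      Matrix.IsHermitian.eigenvalues_mem_spectrum_real hBH i
    have hBalg : B = algebraMap ℝ (Matrix V V ℝ) m + A := by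
      rw [hB, Algebra.algebraMap_eq_smul_one, add_comm]
    have h2 : spectrum ℝ B = ({m} : Set ℝ) + spectrum ℝ A := by
      rw [hBalg, ← spectrum.singleton_add_eq]
    rw [h2] at h1
    obtain ⟨r, hr, s, hs, hrs⟩ := Set.mem_add.mp h1
    simp only [Set.mem_singleton_iff] at hr
    have := hspec.2 hs
    subst hr
    linarith [hrs]
  intro x
  simpa using hBpsd.dotProduct_mulVec_nonneg x

set_option maxHeartbeats 1000000

/-- Lemma 3.2: let `Γ` have smallest adjacency eigenvalue `-m`, with any two distinct
non-adjacent vertices having at most `μ` common neighbors. If `Γ` has a maximal clique `C`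
of order `c ≥ (m-1)(4m-1)` and a vertex `y ∉ C` with `a` neighbors in `C`, and
`μ < (c+m-1+√D)/2` where `D = (c+m-1)(c-(m-1)(4m-1))`, then `a ≤ (c+m-1-√D)/2`. -/
theorem maximal_clique_partial_adjacency_bound {V : Type*} [Fintype V] [DecidableEq V]
    (G : SimpleGraph V) [DecidableRel G.Adj] (m : ℝ) (μ : ℕ)
    (hspec : IsLeast (spectrum ℝ (G.adjMatrix ℝ)) (-m))
    (hμ : ∀ u v : V, u ≠ v → ¬G.Adj u v →
      (G.neighborFinset u ∩ G.neighborFinset v).card ≤ μ)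
    (C : Finset V) (hclique : G.IsClique (C : Set V))
    (hmax : ∀ y ∉ C, ∃ z ∈ C, ¬G.Adj y z)
    (c : ℕ) (hc : C.card = c) (hcm : (m - 1) * (4 * m - 1) ≤ (c : ℝ))
    (y : V) (hy : y ∉ C) (a : ℕ) (ha : (C.filter (fun z => G.Adj y z)).card = a)
    (hμsmall : (μ : ℝ) <
      ((c : ℝ) + m - 1 +
        Real.sqrt (((c : ℝ) + m - 1) * ((c : ℝ) - (m - 1) * (4 * m - 1)))) / 2) :
    (a : ℝ) ≤
      ((c : ℝ) + m - 1 -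
        Real.sqrt (((c : ℝ) + m - 1) * ((c : ℝ) - (m - 1) * (4 * m - 1)))) / 2 := by
  have hPSD := adj_psd_of_least G m hspec
  set B := G.adjMatrix ℝ + m • (1 : Matrix V V ℝ) with hBdef
  set S : Finset V := C.filter (fun z => G.Adj y z) with hSdef
  set T : Finset V := C \ S with hTdef
  have hSC : S ⊆ C := Finset.filter_subset _ _
  have hTC : T ⊆ C := Finset.sdiff_subset
  have hST : Disjoint S T := Finset.disjoint_sdiff
  have hyS : y ∉ S := fun h => hy (hSC h)
  have hyT : y ∉ T := fun h => hy (hTC h)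
  have hadjC : ∀ u ∈ C, ∀ w ∈ C, u ≠ w → G.Adj u w := fun u hu w hw hne =>
    hclique hu hw hne
  have hTcard : T.card = c - a := by
    rw [hTdef, Finset.card_sdiff_of_subset hSC, hc, ha]
  have hac : a ≤ c := by
    rw [← hc, ← ha]; exact Finset.card_le_card hSC
  by_cases haz : a = 0
  · -- case a = 0
    subst haz
    by_cases hE : ∃ u v, G.Adj u v
    · -- there is an edge, hence m ≥ 1
      obtain ⟨u, v, huv⟩ := hE
      have hne : u ≠ v := G.ne_of_adj huv
      have hm1 : 1 ≤ m := by
        have h := hPSD (Pi.single u (1:ℝ) - Pi.single v 1)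
        simp only [Matrix.mulVec_sub, Matrix.mulVec_single_one, Matrix.col_apply, dotProduct_sub,
          sub_dotProduct, single_dotProduct, one_mul, mul_one] at h
        simp only [hBdef, Matrix.add_apply, Matrix.smul_apply, Matrix.one_apply,
          SimpleGraph.adjMatrix_apply, smul_eq_mul] at h
        simp only [huv, G.adj_symm huv, hne, hne.symm, SimpleGraph.irrefl, if_true, if_false,
          eq_self_iff_true] at h
        norm_num at h
        linarith
      have hcnn : (0:ℝ) ≤ (c : ℝ) := Nat.cast_nonneg c
      have hcm1 : (0:ℝ) ≤ (c : ℝ) + m - 1 := by linarith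
      have hsq : Real.sqrt (((c : ℝ) + m - 1) * ((c : ℝ) - (m - 1) * (4 * m - 1)))
          ≤ (c : ℝ) + m - 1 := by
        have h1 : (((c : ℝ) + m - 1) * ((c : ℝ) - (m - 1) * (4 * m - 1)))
            ≤ ((c : ℝ) + m - 1) * ((c : ℝ) + m - 1) := by
          nlinarith [mul_nonneg hcm1 (by nlinarith : (0:ℝ) ≤ (m-1)*(4*m))]
        calc Real.sqrt (((c : ℝ) + m - 1) * ((c : ℝ) - (m - 1) * (4 * m - 1)))
            ≤ Real.sqrt (((c : ℝ) + m - 1) * ((c : ℝ) + m - 1)) := Real.sqrt_le_sqrt h1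
          _ = (c : ℝ) + m - 1 := Real.sqrt_mul_self hcm1
      simp only [Nat.cast_zero]
      linarith
    · -- no edge at all: adjacency matrix is 0 and m = 0
      push_neg at hE
      have hA0 : G.adjMatrix ℝ = 0 := by
        ext i j
        simp only [SimpleGraph.adjMatrix_apply, Matrix.zero_apply, ite_eq_right_iff]
        exact fun h => absurd h (hE i j)
      have : Nonempty V := ⟨y⟩
      have hm0 : m = 0 := by
        have h1 := hspec.1
        rw [hA0, spectrum.zero_eq] at h1
        simpa using (neg_eq_zero.mp (Set.mem_singleton_iff.mp h1))
      subst hm0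
      have hc1 : (1:ℝ) ≤ (c:ℝ) := by nlinarith [hcm]
      have hsq : Real.sqrt (((c : ℝ) + 0 - 1) * ((c : ℝ) - (0 - 1) * (4 * 0 - 1)))
          = (c : ℝ) - 1 := by
        rw [show ((c : ℝ) + 0 - 1) * ((c : ℝ) - (0 - 1) * (4 * 0 - 1))
          = ((c:ℝ) - 1) * ((c:ℝ) - 1) by ring]
        exact Real.sqrt_mul_self (by linarith)
      rw [hsq]
      simp only [Nat.cast_zero]
      linarith
  · -- main case : a ≥ 1
    have ha1 : 1 ≤ a := Nat.one_le_iff_ne_zero.mpr haz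
    obtain ⟨x₀, hx₀S⟩ := Finset.card_pos.mp (show 0 < S.card by omega)
    have hx₀C : x₀ ∈ C := hSC hx₀S
    have hyx₀ : G.Adj y x₀ := (Finset.mem_filter.mp hx₀S).2
    obtain ⟨z, hzC, hzadj⟩ := hmax y hy
    have hzT : z ∈ T := Finset.mem_sdiff.mpr ⟨hzC, fun h => hzadj (Finset.mem_filter.mp h).2⟩
    have hx₀z : x₀ ≠ z := fun h => hzadj (h ▸ hyx₀)
    have hyx₀ne : y ≠ x₀ := fun h => hy (h ▸ hx₀C)
    have hyzne : y ≠ z := fun h => hy (h ▸ hzC)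
    have hadjx₀z : G.Adj x₀ z := hadjC x₀ hx₀C z hzC hx₀z
    have nzy : ¬ G.Adj z y := fun h => hzadj (G.adj_symm h)
    -- m ≥ 4/3 from the path z - x₀ - y (with y,z nonadjacent)
    have hm43 : 4/3 ≤ m := by
      have h := hPSD (Pi.single y (1:ℝ) - Pi.single x₀ 1 + Pi.single z 1)
      simp only [Matrix.mulVec_add, Matrix.mulVec_sub, Matrix.mulVec_single_one, Matrix.col_apply,
        dotProduct_add, dotProduct_sub, add_dotProduct,
        sub_dotProduct, single_dotProduct, one_mul, mul_one] at h
      simp only [hBdef, Matrix.add_apply, Matrix.smul_apply, Matrix.one_apply,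
        SimpleGraph.adjMatrix_apply, smul_eq_mul] at h
      simp only [hyx₀, G.adj_symm hyx₀, hadjx₀z, G.adj_symm hadjx₀z, hzadj, nzy,
        SimpleGraph.irrefl, hyx₀ne, hyx₀ne.symm, hyzne, hyzne.symm, hx₀z, hx₀z.symm,
        if_true, if_false, eq_self_iff_true] at h
      norm_num at h
      linarith
    -- the key quadratic-form inequality
    have hQ : ∀ α β γ : ℝ, 0 ≤
        (a:ℝ) * (α * (α * ((a:ℝ)-1) + β * (T.card:ℝ) + γ + m*α))
      + (T.card:ℝ) * (β * (α*(a:ℝ) + β*((T.card:ℝ)-1) + m*β))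
      + γ * (α*(a:ℝ) + m*γ) := by
      intro α β γ
      set x : V → ℝ := fun v =>
        (if v ∈ S then α else 0) + (if v ∈ T then β else 0) + (if v = y then γ else 0)
        with hxdef
      have hxS : ∀ u ∈ S, x u = α := by
        intro u hu
        have h1 : u ∉ T := Finset.disjoint_left.mp hST hu
        have h2 : u ≠ y := fun h => hyS (h ▸ hu)
        simp [hxdef, hu, h1, h2]
      have hxT : ∀ u ∈ T, x u = β := by
        intro u hu
        have h1 : u ∉ S := Finset.disjoint_right.mp hST hu
        have h2 : u ≠ y := fun h => hyT (h ▸ hu)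
        simp [hxdef, hu, h1, h2]
      have hxy : x y = γ := by simp [hxdef, hyS, hyT]
      have hx0 : ∀ u, u ∉ S → u ∉ T → u ≠ y → x u = 0 := by
        intro u h1 h2 h3; simp [hxdef, h1, h2, h3]
      have hinner : ∀ u : V, ∑ w ∈ G.neighborFinset u, x w
          = α * ((G.neighborFinset u ∩ S).card : ℝ)
            + β * ((G.neighborFinset u ∩ T).card : ℝ)
            + (if y ∈ G.neighborFinset u then γ else 0) := by
        intro u
        simp only [hxdef]
        rw [Finset.sum_add_distrib, Finset.sum_add_distrib, Finset.sum_ite_mem,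
          Finset.sum_ite_mem, Finset.sum_const, Finset.sum_const, Finset.sum_ite_eq']
        simp [nsmul_eq_mul, mul_comm]
      have cSS : ∀ u ∈ S, G.neighborFinset u ∩ S = S.erase u := by
        intro u hu; ext w
        simp only [Finset.mem_inter, SimpleGraph.mem_neighborFinset, Finset.mem_erase]
        constructor
        · rintro ⟨hadj, hwS⟩; exact ⟨(G.ne_of_adj hadj).symm, hwS⟩
        · rintro ⟨hne, hwS⟩
          exact ⟨hadjC u (hSC hu) w (hSC hwS) (Ne.symm hne), hwS⟩
      have cST : ∀ u ∈ S, G.neighborFinset u ∩ T = T := by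
        intro u hu; ext w
        simp only [Finset.mem_inter, SimpleGraph.mem_neighborFinset]
        constructor
        · rintro ⟨_, h⟩; exact h
        · intro hwT
          refine ⟨hadjC u (hSC hu) w (hTC hwT) ?_, hwT⟩
          exact fun h => (Finset.disjoint_left.mp hST hu) (h ▸ hwT)
      have cSy : ∀ u ∈ S, y ∈ G.neighborFinset u := fun u hu =>
        (SimpleGraph.mem_neighborFinset _ _ _).mpr (G.adj_symm (Finset.mem_filter.mp hu).2)
      have cTS : ∀ u ∈ T, G.neighborFinset u ∩ S = S := by
        intro u hu; ext w
        simp only [Finset.mem_inter, SimpleGraph.mem_neighborFinset]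
        constructor
        · rintro ⟨_, h⟩; exact h
        · intro hwS
          refine ⟨hadjC u (hTC hu) w (hSC hwS) ?_, hwS⟩
          exact fun h => (Finset.disjoint_right.mp hST hu) (h ▸ hwS)
      have cTT : ∀ u ∈ T, G.neighborFinset u ∩ T = T.erase u := by
        intro u hu; ext w
        simp only [Finset.mem_inter, SimpleGraph.mem_neighborFinset, Finset.mem_erase]
        constructor
        · rintro ⟨hadj, hwT⟩; exact ⟨(G.ne_of_adj hadj).symm, hwT⟩
        · rintro ⟨hne, hwT⟩
          exact ⟨hadjC u (hTC hu) w (hTC hwT) (Ne.symm hne), hwT⟩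
      have cTy : ∀ u ∈ T, y ∉ G.neighborFinset u := by
        intro u hu h
        have hadj : G.Adj y u := G.adj_symm ((SimpleGraph.mem_neighborFinset _ _ _).mp h)
        exact (Finset.mem_sdiff.mp hu).2
          (Finset.mem_filter.mpr ⟨(Finset.mem_sdiff.mp hu).1, hadj⟩)
      have cyS : G.neighborFinset y ∩ S = S := by
        ext w
        simp only [Finset.mem_inter, SimpleGraph.mem_neighborFinset]
        exact ⟨fun ⟨_, h⟩ => h, fun h => ⟨(Finset.mem_filter.mp h).2, h⟩⟩
      have cyT : G.neighborFinset y ∩ T = ∅ := by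
        ext w
        simp only [Finset.mem_inter, SimpleGraph.mem_neighborFinset,
          Finset.notMem_empty, iff_false]
        rintro ⟨hadj, hwT⟩
        exact (Finset.mem_sdiff.mp hwT).2
          (Finset.mem_filter.mpr ⟨(Finset.mem_sdiff.mp hwT).1, hadj⟩)
      have cyy : y ∉ G.neighborFinset y := by simp
      have hQeq : x ⬝ᵥ (B *ᵥ x)
          = ∑ u : V, x u * ((∑ w ∈ G.neighborFinset u, x w) + m * x u) := by
        simp only [dotProduct, hBdef, Matrix.add_mulVec, Matrix.smul_mulVec,
          Matrix.one_mulVec, Pi.add_apply, Pi.smul_apply, smul_eq_mul]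
        refine Finset.sum_congr rfl fun u _ => ?_
        rw [SimpleGraph.adjMatrix_mulVec_apply]
      have hWzero : ∀ u ∈ (Finset.univ : Finset V),
          u ∉ (S ∪ T) ∪ {y} → x u * ((∑ w ∈ G.neighborFinset u, x w) + m * x u) = 0 := by
        intro u _ hu
        simp only [Finset.mem_union, Finset.mem_singleton, not_or] at hu
        rw [hx0 u hu.1.1 hu.1.2 hu.2, zero_mul]
      have hdisj2 : Disjoint (S ∪ T) ({y} : Finset V) := by
        simp [Finset.disjoint_singleton_right, hyS, hyT]
      have hsplit : ∑ u : V, x u * ((∑ w ∈ G.neighborFinset u, x w) + m * x u)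
          = (∑ u ∈ S, x u * ((∑ w ∈ G.neighborFinset u, x w) + m * x u))
          + (∑ u ∈ T, x u * ((∑ w ∈ G.neighborFinset u, x w) + m * x u))
          + x y * ((∑ w ∈ G.neighborFinset y, x w) + m * x y) := by
        rw [← Finset.sum_subset (Finset.subset_univ ((S ∪ T) ∪ {y})) hWzero,
          Finset.sum_union hdisj2, Finset.sum_union hST, Finset.sum_singleton]
      have hcast1 : ((a - 1 : ℕ) : ℝ) = (a:ℝ) - 1 := by
        push_cast [ha1]; ring
      have hT1 : 1 ≤ T.card := Finset.card_pos.mpr ⟨z, hzT⟩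
      have hcast2 : ((T.card - 1 : ℕ) : ℝ) = (T.card:ℝ) - 1 := by
        push_cast [hT1]; ring
      have hsumS : ∑ u ∈ S, x u * ((∑ w ∈ G.neighborFinset u, x w) + m * x u)
          = (a:ℝ) * (α * (α * ((a:ℝ)-1) + β * (T.card:ℝ) + γ + m*α)) := by
        have hterm : ∀ u ∈ S, x u * ((∑ w ∈ G.neighborFinset u, x w) + m * x u)
            = α * (α * ((a:ℝ)-1) + β * (T.card:ℝ) + γ + m*α) := by
          intro u hu
          rw [hxS u hu, hinner u, cSS u hu, cST u hu, if_pos (cSy u hu),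
            Finset.card_erase_of_mem hu, ha, hcast1]
        rw [Finset.sum_congr rfl hterm, Finset.sum_const, ha, nsmul_eq_mul]
      have hsumT : ∑ u ∈ T, x u * ((∑ w ∈ G.neighborFinset u, x w) + m * x u)
          = (T.card:ℝ) * (β * (α*(a:ℝ) + β*((T.card:ℝ)-1) + m*β)) := by
        have hterm : ∀ u ∈ T, x u * ((∑ w ∈ G.neighborFinset u, x w) + m * x u)
            = β * (α*(a:ℝ) + β*((T.card:ℝ)-1) + m*β) := by
          intro u hu
          rw [hxT u hu, hinner u, cTS u hu, cTT u hu, if_neg (cTy u hu),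
            Finset.card_erase_of_mem hu, ha, hcast2]
          ring
        rw [Finset.sum_congr rfl hterm, Finset.sum_const, nsmul_eq_mul]
      have hsumy : x y * ((∑ w ∈ G.neighborFinset y, x w) + m * x y)
          = γ * (α*(a:ℝ) + m*γ) := by
        rw [hxy, hinner y, cyS, cyT, if_neg cyy, ha]
        simp
      have h := hPSD x
      rw [hQeq, hsplit, hsumS, hsumT, hsumy] at h
      exact h
    -- specialize the quadratic form at the optimizing vector
    have hs1 : (1:ℝ) ≤ (a:ℝ) := by exact_mod_cast ha1
    have hT1 : 1 ≤ T.card := Finset.card_pos.mpr ⟨z, hzT⟩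
    have ht1 : (1:ℝ) ≤ (T.card:ℝ) := by exact_mod_cast hT1
    set s : ℝ := (a:ℝ) with hsdef
    set t : ℝ := (T.card:ℝ) with htdef
    have hkey := hQ (-(s*(t*(t-1+m)))) (s*(s*t)) (s*t*(m-1)*(s+t+m-1))
    have hfact :
        s * ((-(s*(t*(t-1+m)))) * ((-(s*(t*(t-1+m)))) * (s-1) + (s*(s*t)) * t
            + (s*t*(m-1)*(s+t+m-1)) + m*(-(s*(t*(t-1+m))))))
        + t * ((s*(s*t)) * ((-(s*(t*(t-1+m))))*s + (s*(s*t))*(t-1) + m*(s*(s*t))))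
        + (s*t*(m-1)*(s+t+m-1)) * ((-(s*(t*(t-1+m))))*s + m*(s*t*(m-1)*(s+t+m-1)))
        = (s*t)^2*((m-1)*(s+t+m-1))
          * (s^2 - s*(s+t+m-1) + m*(m-1)*(s+t+m-1)) := by ring
    rw [hfact] at hkey
    have hKpos : 0 < (s*t)^2*((m-1)*(s+t+m-1)) := by
      have h1 : 0 < s*t := by nlinarith
      have h2 : 0 < (s*t)^2 := by positivity
      have h3 : 0 < (m-1)*(s+t+m-1) := by nlinarith
      exact mul_pos h2 h3
    have hquadst : 0 ≤ s^2 - s*(s+t+m-1) + m*(m-1)*(s+t+m-1) := by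
      by_contra hcon
      push_neg at hcon
      nlinarith [mul_pos hKpos (by linarith : 0 < -(s^2 - s*(s+t+m-1) + m*(m-1)*(s+t+m-1)))]
    have hct : t = (c:ℝ) - s := by
      rw [htdef, hsdef, hTcard]
      push_cast [hac]
      ring
    have hquad : 0 ≤ s^2 - s*((c:ℝ)+m-1) + m*(m-1)*((c:ℝ)+m-1) := by
      rw [hct] at hquadst
      nlinarith [hquadst]
    -- a ≤ μ
    have haμ : s ≤ (μ:ℝ) := by
      have hsub : S ⊆ G.neighborFinset y ∩ G.neighborFinset z := by
        intro w hw
        have hwadj : G.Adj y w := (Finset.mem_filter.mp hw).2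
        have hwC := hSC hw
        have hwz : w ≠ z := fun h => hzadj (h ▸ hwadj)
        exact Finset.mem_inter.mpr ⟨(SimpleGraph.mem_neighborFinset _ _ _).mpr hwadj,
          (SimpleGraph.mem_neighborFinset _ _ _).mpr (hadjC z hzC w hwC (Ne.symm hwz))⟩
      have h1 : a ≤ μ := le_trans (ha ▸ Finset.card_le_card hsub) (hμ y z hyzne hzadj)
      rw [hsdef]
      exact_mod_cast h1
    -- conclude
    have hc2 : s + t = (c:ℝ) := by rw [hct]; ring
    have hcm1 : (0:ℝ) ≤ (c:ℝ)+m-1 := by nlinarith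
    have hD : 0 ≤ ((c:ℝ)+m-1) * ((c:ℝ) - (m-1)*(4*m-1)) :=
      mul_nonneg hcm1 (by linarith [hcm])
    set r := Real.sqrt (((c : ℝ) + m - 1) * ((c : ℝ) - (m - 1) * (4 * m - 1))) with hrdef
    have hr0 : 0 ≤ r := Real.sqrt_nonneg _
    have hr2 : r*r = ((c:ℝ)+m-1) * ((c:ℝ) - (m-1)*(4*m-1)) := Real.mul_self_sqrt hD
    by_contra hcon
    push_neg at hcon
    have h1 : 0 < 2*s - ((c:ℝ)+m-1) + r := by linarith
    have h2 : 0 < ((c:ℝ)+m-1) + r - 2*s := by linarith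
    nlinarith [mul_pos h1 h2, hquad, hr2]
end

section
/- Let Γ be an edge-regular graph with parameters (v, k, λ) containing a clique C of order c, let x ∈ C, and suppose every vertex in Γ(x)∖C has at most n neighbors in C∖{x}. Then (c-1)(λ-(c-2)) ≤ n(k-(c-1)), i.e., (c-1)(λ-c+2)/(k-c+1) ≤ n when k > c-1. -/
/-- Lemma 3.4: in an edge-regular graph with parameters `(v, k, λ)` containing a clique `C`
of order `c`, if `x ∈ C` and every vertex of `Γ(x) ∖ C` has at most `n` neighbors in
`C ∖ {x}`, then `(c-1)(λ-(c-2)) ≤ n(k-(c-1))`. -/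
theorem edge_regular_clique_edge_count {V : Type*} [Fintype V] [DecidableEq V]
    (G : SimpleGraph V) [DecidableRel G.Adj] (v k lam : ℕ)
    (hv : Fintype.card V = v)
    (hreg : G.IsRegularOfDegree k)
    (hlam : ∀ u w : V, G.Adj u w → (G.neighborFinset u ∩ G.neighborFinset w).card = lam)
    (C : Finset V) (hclique : G.IsClique (C : Set V)) (c : ℕ) (hc : C.card = c)
    (x : V) (hx : x ∈ C) (n : ℕ)
    (hn : ∀ y ∈ G.neighborFinset x \ C,
      (((C.erase x).filter (fun z => G.Adj y z)).card ≤ n)) :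
    ((c : ℤ) - 1) * ((lam : ℤ) - ((c : ℤ) - 2)) ≤ (n : ℤ) * ((k : ℤ) - ((c : ℤ) - 1)) := by
  classical
  set A := G.neighborFinset x \ C with hA
  -- C.erase x ⊆ Γ(x)
  have hsub : C.erase x ⊆ G.neighborFinset x := by
    intro z hz
    rw [Finset.mem_erase] at hz
    rw [SimpleGraph.mem_neighborFinset]
    exact hclique hx hz.2 (Ne.symm hz.1)
  have hinter : G.neighborFinset x ∩ C = C.erase x := by
    ext z
    simp only [Finset.mem_inter, Finset.mem_erase, SimpleGraph.mem_neighborFinset]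
    constructor
    · rintro ⟨ha, hzC⟩; exact ⟨fun h => G.irrefl (h ▸ ha), hzC⟩
    · rintro ⟨hne, hzC⟩; exact ⟨hclique hx hzC (Ne.symm hne), hzC⟩
  have hc1 : 1 ≤ c := hc ▸ Finset.card_pos.2 ⟨x, hx⟩
  have hcardE : (C.erase x).card = c - 1 := by rw [Finset.card_erase_of_mem hx, hc]
  have hkc : c - 1 ≤ k := by
    have := Finset.card_le_card hsub
    rwa [hcardE, G.card_neighborFinset_eq_degree, hreg x] at this
  have hcardA : A.card = k - (c - 1) := by
    have h := Finset.card_sdiff_add_card_inter (G.neighborFinset x) C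
    rw [← hA, hinter, hcardE, G.card_neighborFinset_eq_degree, hreg x] at h
    omega
  rcases Nat.lt_or_ge c 2 with hc2 | hc2
  · -- c = 1
    interval_cases c
    have : (0:ℤ) ≤ (n:ℤ) * k := by positivity
    simpa using this
  -- main case c ≥ 2
  have hlamc : c - 2 ≤ lam := by
    obtain ⟨y, hy⟩ : (C.erase x).Nonempty := by
      rw [← Finset.card_pos, hcardE]; omega
    have hyC := (Finset.mem_erase.1 hy).2
    have hyx := (Finset.mem_erase.1 hy).1
    have hxy : G.Adj x y := hclique hx hyC (Ne.symm hyx)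
    have hsub2 : (C.erase x).erase y ⊆ G.neighborFinset x ∩ G.neighborFinset y := by
      intro z hz
      have hz1 := Finset.mem_erase.1 hz
      have hz2 := Finset.mem_erase.1 hz1.2
      refine Finset.mem_inter.2 ⟨hsub hz1.2, ?_⟩
      rw [SimpleGraph.mem_neighborFinset]
      exact hclique hyC hz2.2 (Ne.symm hz1.1)
    have := Finset.card_le_card hsub2
    rw [Finset.card_erase_of_mem hy, hcardE, hlam x y hxy] at this
    omega
  -- per-vertex count inside the clique
  have hper : ∀ y ∈ C.erase x, (A.filter (fun z => G.Adj y z)).card = lam - (c - 2) := by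
    intro y hy
    have hyC := (Finset.mem_erase.1 hy).2
    have hyx := (Finset.mem_erase.1 hy).1
    have hxy : G.Adj x y := hclique hx hyC (Ne.symm hyx)
    have heq : A.filter (fun z => G.Adj y z)
        = (G.neighborFinset x ∩ G.neighborFinset y) \ C := by
      ext z
      simp only [hA, Finset.mem_filter, Finset.mem_sdiff, Finset.mem_inter,
        SimpleGraph.mem_neighborFinset]
      tauto
    have hinter2 : (G.neighborFinset x ∩ G.neighborFinset y) ∩ C = (C.erase x).erase y := by
      ext z
      simp only [Finset.mem_inter, Finset.mem_erase, SimpleGraph.mem_neighborFinset]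
      constructor
      · rintro ⟨⟨ha, hb⟩, hzC⟩
        exact ⟨fun h => G.irrefl (h ▸ hb), fun h => G.irrefl (h ▸ ha), hzC⟩
      · rintro ⟨hzy, hzx, hzC⟩
        exact ⟨⟨hclique hx hzC (Ne.symm hzx), hclique hyC hzC (Ne.symm hzy)⟩, hzC⟩
    have h := Finset.card_sdiff_add_card_inter (G.neighborFinset x ∩ G.neighborFinset y) C
    rw [hinter2, hlam x y hxy, Finset.card_erase_of_mem hy, hcardE] at h
    rw [heq]
    omega
  -- double counting
  have hswap : ∑ y ∈ A, ((C.erase x).filter (fun z => G.Adj y z)).card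
      = ∑ z ∈ C.erase x, (A.filter (fun y => G.Adj z y)).card := by
    simp only [Finset.card_filter]
    rw [Finset.sum_comm]
    apply Finset.sum_congr rfl
    intro z _
    apply Finset.sum_congr rfl
    intro y _
    simp [G.adj_comm]
  have hle : (c - 1) * (lam - (c - 2)) ≤ n * (k - (c - 1)) := by
    calc (c - 1) * (lam - (c - 2))
        = ∑ z ∈ C.erase x, (A.filter (fun y => G.Adj z y)).card := by
          rw [Finset.sum_congr rfl hper, Finset.sum_const, hcardE, smul_eq_mul]
      _ = ∑ y ∈ A, ((C.erase x).filter (fun z => G.Adj y z)).card := hswap.symm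
      _ ≤ ∑ _y ∈ A, n := Finset.sum_le_sum hn
      _ = n * (k - (c - 1)) := by rw [Finset.sum_const, hcardA, smul_eq_mul, mul_comm]
  zify [hlamc, hkc, hc1, hc2] at hle
  linarith
end

section
/- Let Γ be an amply regular graph with parameters (v, k, λ, μ) containing a maximal clique C of order c with 2 ≤ c and c - 1 < k. Then (c-1)(λ-(c-2)) ≤ (μ-1)(k-(c-1)). -/
/-- Corollary 3.5: in an amply regular graph with parameters `(v, k, λ, μ)` containing a
maximal clique `C` of order `c` with `2 ≤ c` and `c - 1 < k`, one has
`(c-1)(λ-(c-2)) ≤ (μ-1)(k-(c-1))`. -/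
theorem amply_regular_maximal_clique_bound {V : Type*} [Fintype V] [DecidableEq V]
    (G : SimpleGraph V) [DecidableRel G.Adj] (v k lam μ : ℕ)
    (hv : Fintype.card V = v)
    (hreg : G.IsRegularOfDegree k)
    (hlam : ∀ u w : V, G.Adj u w → (G.neighborFinset u ∩ G.neighborFinset w).card = lam)
    (hμ : ∀ u w : V, u ≠ w → ¬G.Adj u w → (G.neighborFinset u ∩ G.neighborFinset w).Nonempty →
      (G.neighborFinset u ∩ G.neighborFinset w).card = μ)
    (C : Finset V) (hclique : G.IsClique (C : Set V))
    (hmax : ∀ y ∉ C, ∃ z ∈ C, ¬G.Adj y z)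
    (c : ℕ) (hc : C.card = c) (hc2 : 2 ≤ c) (hck : c - 1 < k) :
    ((c : ℤ) - 1) * ((lam : ℤ) - ((c : ℤ) - 2)) ≤
      ((μ : ℤ) - 1) * ((k : ℤ) - ((c : ℤ) - 1)) := by
  -- pick x ∈ C
  obtain ⟨x, hx⟩ : C.Nonempty := Finset.card_pos.mp (by omega)
  -- C.erase x ⊆ Γ(x)
  have hsubE : C.erase x ⊆ G.neighborFinset x := by
    intro z hz
    rw [SimpleGraph.mem_neighborFinset]
    exact hclique hx (Finset.mem_of_mem_erase hz) (Ne.symm (Finset.ne_of_mem_erase hz))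
  set N : Finset V := G.neighborFinset x \ C with hN
  have hxC : ∀ z ∈ C, z ≠ x → G.Adj x z := fun z hz hzx =>
    hclique hx hz (Ne.symm hzx)
  have hNcard : N.card = k - (c - 1) := by
    have h1 : N = G.neighborFinset x \ C.erase x := by
      ext y
      simp only [hN, Finset.mem_sdiff, Finset.mem_erase, SimpleGraph.mem_neighborFinset]
      constructor
      · rintro ⟨hy, hy2⟩; exact ⟨hy, fun h => hy2 h.2⟩
      · rintro ⟨hy, hy2⟩
        refine ⟨hy, fun h => hy2 ⟨fun he => G.irrefl (he ▸ hy), h⟩⟩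
    rw [h1, Finset.card_sdiff_of_subset hsubE, Finset.card_erase_of_mem hx, hc,
      show (G.neighborFinset x).card = k from hreg x]
  have hEcard : (C.erase x).card = c - 1 := by
    rw [Finset.card_erase_of_mem hx, hc]
  -- Key lemma A: for z ∈ C.erase x, the number of y ∈ N adjacent to z is lam - (c-2),
  -- and c - 2 ≤ lam.
  have lemA : ∀ z ∈ C.erase x,
      (N.filter (fun y => G.Adj z y)).card + (c - 2) = lam := by
    intro z hz
    have hzC := Finset.mem_of_mem_erase hz
    have hzx := Finset.ne_of_mem_erase hz
    have hadj : G.Adj x z := hxC z hzC hzx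
    have hA := hlam x z hadj
    have hsplit : G.neighborFinset x ∩ G.neighborFinset z =
        (N.filter (fun y => G.Adj z y)) ∪ ((C.erase x).erase z) := by
      ext w
      simp only [Finset.mem_inter, Finset.mem_union, Finset.mem_filter, Finset.mem_sdiff,
        Finset.mem_erase, SimpleGraph.mem_neighborFinset, hN]
      constructor
      · rintro ⟨hw1, hw2⟩
        by_cases hwC : w ∈ C
        · exact Or.inr ⟨fun h => G.irrefl (h ▸ hw2), fun h => G.irrefl (h ▸ hw1), hwC⟩
        · exact Or.inl ⟨⟨hw1, hwC⟩, hw2⟩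
      · rintro (⟨⟨hw1, _⟩, hw2⟩ | ⟨hwz, hwx, hwC⟩)
        · exact ⟨hw1, hw2⟩
        · exact ⟨hxC w hwC hwx, hclique hzC hwC (Ne.symm hwz)⟩
    have hdisj : Disjoint (N.filter (fun y => G.Adj z y)) ((C.erase x).erase z) := by
      refine Finset.disjoint_left.mpr ?_
      intro w hw hw'
      have := (Finset.mem_filter.mp hw).1
      exact (Finset.mem_sdiff.mp this).2 (Finset.mem_of_mem_erase (Finset.mem_of_mem_erase hw'))
    have hcard2 : ((C.erase x).erase z).card = c - 2 := by
      rw [Finset.card_erase_of_mem (Finset.mem_erase.mpr ⟨hzx, hzC⟩), hEcard]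
      omega
    rw [hsplit, Finset.card_union_of_disjoint hdisj, hcard2] at hA
    exact hA
  -- Key lemma B: for y ∈ N, the number of z ∈ C.erase x adjacent to y is ≤ μ - 1, and 1 ≤ μ.
  have lemB : ∀ y ∈ N,
      ((C.erase x).filter (fun z => G.Adj z y)).card + 1 ≤ μ := by
    intro y hy
    obtain ⟨hyx, hyC⟩ := Finset.mem_sdiff.mp hy
    rw [SimpleGraph.mem_neighborFinset] at hyx
    obtain ⟨z0, hz0C, hz0⟩ := hmax y hyC
    have hz0x : z0 ≠ x := fun h => hz0 (h ▸ G.adj_symm hyx)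
    have hyz0 : y ≠ z0 := fun h => hyC (h ▸ hz0C)
    have hxB : x ∈ G.neighborFinset y ∩ G.neighborFinset z0 := by
      rw [Finset.mem_inter, SimpleGraph.mem_neighborFinset, SimpleGraph.mem_neighborFinset]
      exact ⟨G.adj_symm hyx, G.adj_symm (hxC z0 hz0C hz0x)⟩
    have hμval := hμ y z0 hyz0 hz0 ⟨x, hxB⟩
    have hsub : insert x ((C.erase x).filter (fun z => G.Adj z y)) ⊆
        G.neighborFinset y ∩ G.neighborFinset z0 := by
      intro w hw
      rcases Finset.mem_insert.mp hw with h | h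
      · exact h ▸ hxB
      · obtain ⟨hw1, hw2⟩ := Finset.mem_filter.mp h
        have hwC := Finset.mem_of_mem_erase hw1
        have hwz0 : w ≠ z0 := fun h => hz0 (h ▸ G.adj_symm hw2)
        rw [Finset.mem_inter, SimpleGraph.mem_neighborFinset, SimpleGraph.mem_neighborFinset]
        exact ⟨G.adj_symm hw2, hclique hz0C hwC (Ne.symm hwz0)⟩
    have hcardins : (insert x ((C.erase x).filter (fun z => G.Adj z y))).card =
        ((C.erase x).filter (fun z => G.Adj z y)).card + 1 := by
      rw [Finset.card_insert_of_notMem]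
      intro h
      exact (Finset.mem_erase.mp (Finset.mem_filter.mp h).1).1 rfl
    calc ((C.erase x).filter (fun z => G.Adj z y)).card + 1
        = (insert x ((C.erase x).filter (fun z => G.Adj z y))).card := hcardins.symm
      _ ≤ (G.neighborFinset y ∩ G.neighborFinset z0).card := Finset.card_le_card hsub
      _ = μ := hμval
  have hμ1 : 1 ≤ μ := by
    have hNne : N.Nonempty := by
      rw [← Finset.card_pos, hNcard]; omega
    obtain ⟨y, hy⟩ := hNne
    have := lemB y hy; omega
  have hlamge : c - 2 ≤ lam := by
    have hEne : (C.erase x).Nonempty := by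
      rw [← Finset.card_pos, hEcard]; omega
    obtain ⟨z, hz⟩ := hEne
    have := lemA z hz; omega
  -- double counting
  have hsum : ∑ z ∈ C.erase x, (N.filter (fun y => G.Adj z y)).card =
      ∑ y ∈ N, ((C.erase x).filter (fun z => G.Adj z y)).card := by
    simp only [Finset.card_filter]
    exact Finset.sum_comm
  have hleft : ∑ z ∈ C.erase x, (N.filter (fun y => G.Adj z y)).card =
      (c - 1) * (lam - (c - 2)) := by
    rw [Finset.sum_congr rfl (fun z hz => by have := lemA z hz; omega :
      ∀ z ∈ C.erase x, (N.filter (fun y => G.Adj z y)).card = lam - (c - 2)),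
      Finset.sum_const, hEcard, smul_eq_mul]
  have hright : ∑ y ∈ N, ((C.erase x).filter (fun z => G.Adj z y)).card ≤
      (k - (c - 1)) * (μ - 1) := by
    calc ∑ y ∈ N, ((C.erase x).filter (fun z => G.Adj z y)).card
        ≤ ∑ _y ∈ N, (μ - 1) :=
          Finset.sum_le_sum (fun y hy => by have := lemB y hy; omega)
      _ = (k - (c - 1)) * (μ - 1) := by rw [Finset.sum_const, hNcard, smul_eq_mul]
  have hnat : (c - 1) * (lam - (c - 2)) ≤ (μ - 1) * (k - (c - 1)) := by
    rw [← hleft, hsum]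
    calc _ ≤ (k - (c - 1)) * (μ - 1) := hright
      _ = (μ - 1) * (k - (c - 1)) := Nat.mul_comm _ _
  have h1c : 1 ≤ c := by omega
  have hkc : c - 1 ≤ k := by omega
  zify [hc2, h1c, hμ1, hkc, hlamge] at hnat
  exact hnat
end

section
/- Let Γ be an amply regular graph with parameters (v,k,λ,μ), smallest eigenvalue -m with m ≥ 1, and μ > m(m-1). Suppose Γ has a maximal clique C of order c > μ²/(μ - m(m-1)) - m + 1 with c - 1 < k. Then ((c+m-3)(k-c+1) - 2(c-1)(λ-c+2))² - (k-c+1)²·(c+m-1)(c-(m-1)(4m-1)) ≥ 0. -/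
open Finset Pointwise
set_option linter.unusedSectionVars false
set_option linter.unusedVariables false
set_option maxHeartbeats 1000000

namespace MCP
variable {V : Type*} [Fintype V] [DecidableEq V]

def ind (F : Finset V) : V → ℝ := fun z => if z ∈ F then 1 else 0
def qq (W : V → V → ℝ) (p q : V → ℝ) : ℝ := ∑ u, ∑ w, p u * q w * W u w

lemma qq_expand (W : V → V → ℝ) (f g h : V → ℝ) (t a b : ℝ) :
    qq W (fun z => t * f z + a * g z + b * h z) (fun z => t * f z + a * g z + b * h z)
      = t*t* qq W f f + t*a*(qq W f g + qq W g f) + t*b*(qq W f h + qq W h f)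
        + a*a* qq W g g + a*b*(qq W g h + qq W h g) + b*b* qq W h h := by
  unfold qq
  have key : ∀ u w : V,
      (t * f u + a * g u + b * h u) * (t * f w + a * g w + b * h w) * W u w
      = t*t*(f u * f w * W u w) + t*a*(f u * g w * W u w) + t*a*(g u * f w * W u w)
        + t*b*(f u * h w * W u w) + t*b*(h u * f w * W u w) + a*a*(g u * g w * W u w)
        + a*b*(g u * h w * W u w) + a*b*(h u * g w * W u w) + b*b*(h u * h w * W u w) := by
    intros; ring
  simp_rw [key, Finset.sum_add_distrib, ← Finset.mul_sum]
  ring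

lemma qq_ind (W : V → V → ℝ) (P Q : Finset V) :
    qq W (ind P) (ind Q) = ∑ u ∈ P, ∑ w ∈ Q, W u w := by
  unfold qq ind
  simp [ite_mul, zero_mul, one_mul, Finset.sum_ite_mem, Finset.univ_inter, mul_ite, mul_zero]

variable {V : Type*} [Fintype V] [DecidableEq V]

lemma pair_adj (G : SimpleGraph V) [DecidableRel G.Adj] (P Q : Finset V) :
    ∑ u ∈ P, ∑ w ∈ Q, (if G.Adj u w then (1:ℝ) else 0)
      = ∑ u ∈ P, ((Q ∩ G.neighborFinset u).card : ℝ) := by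
  refine Finset.sum_congr rfl fun u _ => ?_
  rw [Finset.sum_boole]
  congr 1
  congr 1
  ext w
  simp [SimpleGraph.mem_neighborFinset, and_comm]

lemma pair_diag (m : ℝ) (P Q : Finset V) :
    ∑ u ∈ P, ∑ w ∈ Q, (if u = w then m else 0) = m * ((P ∩ Q).card : ℝ) := by
  have : ∀ u ∈ P, ∑ w ∈ Q, (if u = w then m else 0) = if u ∈ Q then m else 0 := by
    intro u _
    rw [Finset.sum_ite_eq]
  rw [Finset.sum_congr rfl this]
  rw [Finset.sum_ite_mem]
  simp [mul_comm]

variable {V : Type*} [Fintype V] [DecidableEq V]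

lemma psd_shift (G : SimpleGraph V) [DecidableRel G.Adj] (m : ℝ)
    (hspec : IsLeast (spectrum ℝ (G.adjMatrix ℝ)) (-m)) :
    (G.adjMatrix ℝ + m • 1).PosSemidef := by
  have hA : (G.adjMatrix ℝ).IsHermitian := by
    rw [Matrix.IsHermitian, Matrix.conjTranspose_eq_transpose_of_trivial]
    exact G.isSymm_adjMatrix
  have hM : (G.adjMatrix ℝ + m • 1).IsHermitian := by
    rw [Matrix.IsHermitian, Matrix.conjTranspose_add, Matrix.conjTranspose_smul,
      Matrix.conjTranspose_one, star_trivial, hA]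
  apply (Matrix.IsHermitian.posSemidef_iff_eigenvalues_nonneg hM).mpr
  intro i
  have key : ∀ x : ℝ, x ∈ spectrum ℝ (G.adjMatrix ℝ + m • 1) → 0 ≤ x := by
    intro x hx
    have h1 : (m • 1 : Matrix V V ℝ) = algebraMap ℝ (Matrix V V ℝ) m :=
      (Algebra.algebraMap_eq_smul_one m).symm
    rw [h1, ← spectrum.add_singleton_eq] at hx
    obtain ⟨s, hs, r, hr, hrs⟩ := Set.mem_add.mp hx
    have h2 := hspec.2 hs
    rw [Set.mem_singleton_iff] at hr
    rw [hr] at hrs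
    rw [← hrs]
    linarith
  exact key _ (hM.eigenvalues_mem_spectrum_real i)

lemma psd_qq (G : SimpleGraph V) [DecidableRel G.Adj] (m : ℝ)
    (hspec : IsLeast (spectrum ℝ (G.adjMatrix ℝ)) (-m)) (x : V → ℝ) :
    0 ≤ qq (fun u w => (if G.Adj u w then (1:ℝ) else 0) + (if u = w then m else 0)) x x := by
  have h := (Matrix.posSemidef_iff_dotProduct_mulVec.mp (psd_shift G m hspec)).2 x
  rw [dotProduct, star_trivial] at h
  refine le_trans h (le_of_eq ?_)
  unfold qq
  refine Finset.sum_congr rfl fun u _ => ?_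
  rw [Matrix.mulVec, dotProduct, Finset.mul_sum]
  refine Finset.sum_congr rfl fun w _ => ?_
  simp only [Matrix.add_apply, Matrix.smul_apply, Matrix.one_apply, SimpleGraph.adjMatrix_apply,
    smul_eq_mul]
  split_ifs <;> ring

lemma disc {α β γ : ℝ} (hα : 0 ≤ α) (hγ : 0 ≤ γ)
    (h : ∀ a b : ℝ, 0 ≤ α * a ^ 2 + 2 * β * a * b + γ * b ^ 2) : β ^ 2 ≤ α * γ := by
  by_contra hlt
  push_neg at hlt
  have h1 := h β (-α)
  have h2 := h γ (-β)
  have hα0 : α = 0 := by nlinarith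
  have hγ0 : γ = 0 := by nlinarith
  have h3 := h 1 (-β)
  rw [hα0, hγ0] at h3 hlt
  nlinarith

lemma key_ineq (G : SimpleGraph V) [DecidableRel G.Adj] {m : ℝ} (hm : 1 ≤ m)
    (hspec : IsLeast (spectrum ℝ (G.adjMatrix ℝ)) (-m))
    {C : Finset V} (hclique : G.IsClique (C : Set V)) {y : V} (hy : y ∉ C) :
    ((G.neighborFinset y ∩ C).card : ℝ)
        * ((C.card : ℝ) + m - 1 - ((G.neighborFinset y ∩ C).card : ℝ))
      ≤ m * (m - 1) * ((C.card : ℝ) + m - 1) := by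
  have hm0 : (0:ℝ) < m := lt_of_lt_of_le one_pos hm
  set S : Finset V := G.neighborFinset y ∩ C with hSdef
  set T : Finset V := C \ S with hTdef
  have hSC : S ⊆ C := inter_subset_right
  have hSN : S ⊆ G.neighborFinset y := inter_subset_left
  have hTC : T ⊆ C := sdiff_subset
  set e : ℝ := (S.card : ℝ) with he
  set c : ℝ := (C.card : ℝ) with hc
  have hce : (T.card : ℝ) = c - e := by
    rw [hTdef, Finset.card_sdiff_of_subset hSC, Nat.cast_sub (Finset.card_le_card hSC)]
  have hc0 : (0:ℝ) ≤ c := Nat.cast_nonneg _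
  have he0 : (0:ℝ) ≤ e := Nat.cast_nonneg _
  have hyS : y ∉ S := fun h => hy (hSC h)
  have hyT : y ∉ T := fun h => hy (hTC h)
  have hadj : ∀ u ∈ C, ∀ w ∈ C, u ≠ w → G.Adj u w := fun u hu w hw hne =>
    hclique (Finset.mem_coe.mpr hu) (Finset.mem_coe.mpr hw) hne
  -- intersection identities
  have i1 : ({y} : Finset V) ∩ G.neighborFinset y = ∅ :=
    Finset.singleton_inter_of_notMem (by simp)
  have i2 : S ∩ G.neighborFinset y = S := inter_eq_left.mpr hSN
  have i3 : T ∩ G.neighborFinset y = ∅ := by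
    rw [Finset.eq_empty_iff_forall_notMem]
    intro z hz
    rw [Finset.mem_inter] at hz
    obtain ⟨hzT, hzN⟩ := hz
    rw [hTdef, Finset.mem_sdiff] at hzT
    exact hzT.2 (Finset.mem_inter.mpr ⟨hzN, hzT.1⟩)
  have j1 : ∀ u ∈ S, ({y} : Finset V) ∩ G.neighborFinset u = {y} := by
    intro u hu
    apply Finset.singleton_inter_of_mem
    rw [SimpleGraph.mem_neighborFinset]
    exact (SimpleGraph.mem_neighborFinset G y u |>.mp (hSN hu)).symm
  have j2 : ∀ u ∈ S, S ∩ G.neighborFinset u = S.erase u := by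
    intro u hu
    ext z
    simp only [Finset.mem_inter, SimpleGraph.mem_neighborFinset, Finset.mem_erase]
    constructor
    · rintro ⟨hzS, hadj'⟩; exact ⟨(G.ne_of_adj hadj').symm, hzS⟩
    · rintro ⟨hne, hzS⟩; exact ⟨hzS, hadj u (hSC hu) z (hSC hzS) (Ne.symm hne)⟩
  have j3 : ∀ u ∈ S, T ∩ G.neighborFinset u = T := by
    intro u hu
    apply inter_eq_left.mpr
    intro z hz
    rw [SimpleGraph.mem_neighborFinset]
    have hzS : z ∉ S := by rw [hTdef, Finset.mem_sdiff] at hz; exact hz.2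
    exact hadj u (hSC hu) z (hTC hz) (fun h => hzS (h ▸ hu))
  have k1 : ∀ u ∈ T, ({y} : Finset V) ∩ G.neighborFinset u = ∅ := by
    intro u hu
    apply Finset.singleton_inter_of_notMem
    rw [SimpleGraph.mem_neighborFinset]
    intro hadj'
    have huS : u ∉ S := by rw [hTdef, Finset.mem_sdiff] at hu; exact hu.2
    exact huS (Finset.mem_inter.mpr ⟨(SimpleGraph.mem_neighborFinset G y u).mpr hadj'.symm,
      hTC hu⟩)
  have k2 : ∀ u ∈ T, S ∩ G.neighborFinset u = S := by
    intro u hu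
    apply inter_eq_left.mpr
    intro z hz
    rw [SimpleGraph.mem_neighborFinset]
    have huS : u ∉ S := by rw [hTdef, Finset.mem_sdiff] at hu; exact hu.2
    exact hadj u (hTC hu) z (hSC hz) (fun h => huS (h ▸ hz))
  have k3 : ∀ u ∈ T, T ∩ G.neighborFinset u = T.erase u := by
    intro u hu
    ext z
    simp only [Finset.mem_inter, SimpleGraph.mem_neighborFinset, Finset.mem_erase]
    constructor
    · rintro ⟨hzT, hadj'⟩; exact ⟨(G.ne_of_adj hadj').symm, hzT⟩
    · rintro ⟨hne, hzT⟩; exact ⟨hzT, hadj u (hTC hu) z (hTC hzT) (Ne.symm hne)⟩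
  -- generic qq value
  have hqq : ∀ P Q : Finset V,
      qq (fun u w => (if G.Adj u w then (1:ℝ) else 0) + (if u = w then m else 0)) (ind P) (ind Q)
        = (∑ u ∈ P, ((Q ∩ G.neighborFinset u).card : ℝ)) + m * ((P ∩ Q).card : ℝ) := by
    intro P Q
    rw [qq_ind]
    have hsplit : ∀ u ∈ P, (∑ w ∈ Q, ((if G.Adj u w then (1:ℝ) else 0) + (if u = w then m else 0)))
        = (∑ w ∈ Q, if G.Adj u w then (1:ℝ) else 0) + ∑ w ∈ Q, (if u = w then m else 0) :=
      fun u _ => Finset.sum_add_distrib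
    rw [Finset.sum_congr rfl hsplit, Finset.sum_add_distrib, pair_adj, pair_diag]
  -- the nine values
  have q11 : qq (fun u w => (if G.Adj u w then (1:ℝ) else 0) + (if u = w then m else 0))
      (ind {y}) (ind {y}) = m := by
    rw [hqq, Finset.sum_singleton, i1]
    simp
  have q12 : qq (fun u w => (if G.Adj u w then (1:ℝ) else 0) + (if u = w then m else 0))
      (ind {y}) (ind S) = e := by
    rw [hqq, Finset.sum_singleton, i2, Finset.singleton_inter_of_notMem hyS]
    simp
    rfl
  have q21 : qq (fun u w => (if G.Adj u w then (1:ℝ) else 0) + (if u = w then m else 0))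
      (ind S) (ind {y}) = e := by
    rw [hqq]
    rw [Finset.sum_congr rfl (fun u hu => by rw [j1 u hu])]
    rw [Finset.inter_comm, Finset.singleton_inter_of_notMem hyS]
    simp
    rfl
  have q13 : qq (fun u w => (if G.Adj u w then (1:ℝ) else 0) + (if u = w then m else 0))
      (ind {y}) (ind T) = 0 := by
    rw [hqq, Finset.sum_singleton, i3, Finset.singleton_inter_of_notMem hyT]
    simp
  have q31 : qq (fun u w => (if G.Adj u w then (1:ℝ) else 0) + (if u = w then m else 0))
      (ind T) (ind {y}) = 0 := by
    rw [hqq]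
    rw [Finset.sum_congr rfl (fun u hu => by rw [k1 u hu])]
    rw [Finset.inter_comm, Finset.singleton_inter_of_notMem hyT]
    simp
  have q22 : qq (fun u w => (if G.Adj u w then (1:ℝ) else 0) + (if u = w then m else 0))
      (ind S) (ind S) = e * (e - 1) + m * e := by
    rw [hqq]
    rw [Finset.sum_congr rfl (fun u hu => by
      rw [j2 u hu, Finset.card_erase_of_mem hu,
        Nat.cast_pred (Finset.card_pos.mpr ⟨u, hu⟩)])]
    rw [Finset.sum_const, Finset.inter_self, nsmul_eq_mul]
  have q23 : qq (fun u w => (if G.Adj u w then (1:ℝ) else 0) + (if u = w then m else 0))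
      (ind S) (ind T) = e * (c - e) := by
    rw [hqq]
    rw [Finset.sum_congr rfl (fun u hu => by rw [j3 u hu, hce])]
    rw [Finset.sum_const, Finset.inter_sdiff_self, nsmul_eq_mul]
    simp
    exact Or.inl rfl
  have q32 : qq (fun u w => (if G.Adj u w then (1:ℝ) else 0) + (if u = w then m else 0))
      (ind T) (ind S) = (c - e) * e := by
    rw [hqq]
    rw [Finset.sum_congr rfl (fun u hu => by rw [k2 u hu])]
    rw [Finset.sum_const, Finset.sdiff_inter_self, nsmul_eq_mul, hce]
    simp
    exact Or.inl rfl
  have q33 : qq (fun u w => (if G.Adj u w then (1:ℝ) else 0) + (if u = w then m else 0))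
      (ind T) (ind T) = (c - e) * ((c - e) - 1) + m * (c - e) := by
    rw [hqq]
    rw [Finset.sum_congr rfl (fun u hu => by
      rw [k3 u hu, Finset.card_erase_of_mem hu,
        Nat.cast_pred (Finset.card_pos.mpr ⟨u, hu⟩), hce])]
    rw [Finset.sum_const, Finset.inter_self, nsmul_eq_mul, hce]
  -- the PSD-derived family of inequalities
  have hQab : ∀ a b : ℝ, 0 ≤ (e*(e-1) + m*e - e^2/m) * a^2 + 2*(e*(c-e))*a*b
      + ((c-e)*((c-e)-1) + m*(c-e)) * b^2 := by
    intro a b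
    have h := psd_qq G m hspec
      (fun z => (-(e*a)/m) * ind {y} z + a * ind S z + b * ind T z)
    rw [qq_expand] at h
    rw [q11, q12, q21, q13, q31, q22, q23, q32, q33] at h
    have hid : (e*(e-1) + m*e - e^2/m) * a^2 + 2*(e*(c-e))*a*b
        + ((c-e)*((c-e)-1) + m*(c-e)) * b^2
        = (-(e*a)/m)*(-(e*a)/m)*m + (-(e*a)/m)*a*(e+e) + (-(e*a)/m)*b*(0+0)
          + a*a*(e*(e-1)+m*e) + a*b*(e*(c-e)+(c-e)*e) + b*b*((c-e)*((c-e)-1)+m*(c-e)) := by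
      field_simp
      ring
    rw [hid]
    exact h
  -- case analysis
  rcases Nat.lt_or_ge S.card 1 with h1 | h1
  · have he00 : e = 0 := by
      rw [he]; norm_cast; omega
    rw [he00]
    nlinarith [mul_nonneg (mul_nonneg hm0.le (by linarith : (0:ℝ) ≤ m - 1))
      (by linarith : (0:ℝ) ≤ c + m - 1)]
  have he1 : (1:ℝ) ≤ e := by rw [he]; exact_mod_cast h1
  rcases eq_or_lt_of_le (Finset.card_le_card hSC) with heq | hlt
  · have hec : e = c := by rw [he, hc, heq]
    rw [hec]
    nlinarith [sq_nonneg (m-1)]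
  · have hce1 : (1:ℝ) ≤ c - e := by
      rw [← hce]
      have : 1 ≤ T.card := by
        rw [hTdef, Finset.card_sdiff_of_subset hSC]
        omega
      exact_mod_cast this
    have hα : 0 ≤ e*(e-1) + m*e - e^2/m := by
      have hrw : e*(e-1) + m*e - e^2/m = e*(m-1)*(e+m)/m := by field_simp; ring
      rw [hrw]
      apply div_nonneg _ hm0.le
      apply mul_nonneg (mul_nonneg he0 (by linarith))
      linarith
    have hγ : 0 ≤ (c-e)*((c-e)-1) + m*(c-e) := by nlinarith
    have hd := disc hα hγ hQab
    have hident : m*((e*(e-1) + m*e - e^2/m)*((c-e)*((c-e)-1) + m*(c-e)) - (e*(c-e))^2)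
        = e*(c-e)*(m*(m-1)*(c+m-1) - e*(c+m-1-e)) := by
      field_simp
      ring
    have hX : 0 ≤ m*(m-1)*(c+m-1) - e*(c+m-1-e) := by
      have h5 : 0 < e*(c-e) := by nlinarith
      have h6 : 0 ≤ e*(c-e)*(m*(m-1)*(c+m-1) - e*(c+m-1-e)) := by
        rw [← hident]
        nlinarith
      nlinarith
    linarith

lemma hcount (G : SimpleGraph V) [DecidableRel G.Adj] (u : V) (F : Finset V) :
    ((G.neighborFinset u ∩ F).card : ℝ) = ∑ z ∈ F, (if G.Adj u z then (1:ℝ) else 0) := by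
  rw [Finset.sum_boole]
  congr 1
  congr 1
  ext z
  simp [SimpleGraph.mem_neighborFinset, and_comm]

lemma hcount2 (G : SimpleGraph V) [DecidableRel G.Adj] (x x' : V) (F : Finset V) :
    ∑ y ∈ F, (if G.Adj y x then (1:ℝ) else 0) * (if G.Adj y x' then (1:ℝ) else 0)
      = ((G.neighborFinset x ∩ G.neighborFinset x' ∩ F).card : ℝ) := by
  have hrw : ∀ y ∈ F, (if G.Adj y x then (1:ℝ) else 0) * (if G.Adj y x' then (1:ℝ) else 0)
      = if (G.Adj x y ∧ G.Adj x' y) then (1:ℝ) else 0 := by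
    intro y _
    simp only [G.adj_comm y x, G.adj_comm y x']
    split_ifs <;> simp_all
  rw [Finset.sum_congr rfl hrw, Finset.sum_boole]
  congr 1
  congr 1
  ext z
  simp only [Finset.mem_filter, Finset.mem_inter, SimpleGraph.mem_neighborFinset]
  tauto

lemma double_count (G : SimpleGraph V) [DecidableRel G.Adj] (C : Finset V) :
    ∑ y ∈ Cᶜ, ((G.neighborFinset y ∩ C).card : ℝ)
      = ∑ x ∈ C, ((G.neighborFinset x ∩ Cᶜ).card : ℝ) := by
  simp_rw [hcount G]
  rw [Finset.sum_comm]
  refine Finset.sum_congr rfl fun x _ => Finset.sum_congr rfl fun y _ => ?_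
  exact if_congr (G.adj_comm y x) rfl rfl

lemma pair_identity (G : SimpleGraph V) [DecidableRel G.Adj] (y : V) (C : Finset V) :
    ((G.neighborFinset y ∩ C).card : ℝ) * (((G.neighborFinset y ∩ C).card : ℝ) - 1)
      = ∑ x ∈ C, ∑ x' ∈ C.erase x,
          (if G.Adj y x then (1:ℝ) else 0) * (if G.Adj y x' then (1:ℝ) else 0) := by
  rw [hcount G y C]
  have h1 : ∀ x ∈ C, ∑ x' ∈ C.erase x,
      (if G.Adj y x then (1:ℝ) else 0) * (if G.Adj y x' then (1:ℝ) else 0)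
      = (if G.Adj y x then (1:ℝ) else 0) *
        ((∑ x' ∈ C, if G.Adj y x' then (1:ℝ) else 0) - (if G.Adj y x then (1:ℝ) else 0)) := by
    intro x hx
    rw [← Finset.mul_sum, Finset.sum_erase_eq_sub hx]
  rw [Finset.sum_congr rfl h1]
  have h2 : ∀ x ∈ C, (if G.Adj y x then (1:ℝ) else 0) *
      ((∑ x' ∈ C, if G.Adj y x' then (1:ℝ) else 0) - (if G.Adj y x then (1:ℝ) else 0))
      = (if G.Adj y x then (1:ℝ) else 0) * (∑ x' ∈ C, if G.Adj y x' then (1:ℝ) else 0)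
        - (if G.Adj y x then (1:ℝ) else 0) := by
    intro x hx
    have hsq : (if G.Adj y x then (1:ℝ) else 0) * (if G.Adj y x then (1:ℝ) else 0)
        = (if G.Adj y x then (1:ℝ) else 0) := by split_ifs <;> ring
    rw [mul_sub, hsq]
  rw [Finset.sum_congr rfl h2, Finset.sum_sub_distrib, ← Finset.sum_mul]
  ring


end MCP

open MCP Finset

/-- Lemma 3.7: let `Γ` be amply regular with parameters `(v,k,λ,μ)`, smallest adjacency
eigenvalue `-m` with `m ≥ 1`, and `μ > m(m-1)`. If `Γ` has a maximal clique of order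
`c > μ²/(μ - m(m-1)) - m + 1` with `c - 1 < k`, then the maximal-clique polynomial is
nonnegative at `c`:
`((c+m-3)(k-c+1) - 2(c-1)(λ-c+2))² - (k-c+1)²(c+m-1)(c-(m-1)(4m-1)) ≥ 0`. -/
theorem maximal_clique_polynomial_nonneg {V : Type*} [Fintype V] [DecidableEq V]
    (G : SimpleGraph V) [DecidableRel G.Adj] (v k lam μ : ℕ) (m : ℝ) (hm : 1 ≤ m)
    (hv : Fintype.card V = v)
    (hreg : G.IsRegularOfDegree k)
    (hlam : ∀ u w : V, G.Adj u w → (G.neighborFinset u ∩ G.neighborFinset w).card = lam)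
    (hμ : ∀ u w : V, u ≠ w → ¬G.Adj u w → (G.neighborFinset u ∩ G.neighborFinset w).Nonempty →
      (G.neighborFinset u ∩ G.neighborFinset w).card = μ)
    (hspec : IsLeast (spectrum ℝ (G.adjMatrix ℝ)) (-m))
    (hμm : m * (m - 1) < (μ : ℝ))
    (C : Finset V) (hclique : G.IsClique (C : Set V))
    (hmax : ∀ y ∉ C, ∃ z ∈ C, ¬G.Adj y z)
    (c : ℕ) (hc : C.card = c)
    (hcbig : (μ : ℝ) ^ 2 / ((μ : ℝ) - m * (m - 1)) - m + 1 < (c : ℝ))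
    (hck : c - 1 < k) :
    0 ≤ (((c : ℝ) + m - 3) * ((k : ℝ) - c + 1) -
          2 * ((c : ℝ) - 1) * ((lam : ℝ) - c + 2)) ^ 2 -
        ((k : ℝ) - c + 1) ^ 2 * (((c : ℝ) + m - 1) *
          ((c : ℝ) - (m - 1) * (4 * m - 1))) := by
  subst hc
  have hm0 : (0:ℝ) < m := lt_of_lt_of_le one_pos hm
  have hadj : ∀ u ∈ C, ∀ w ∈ C, u ≠ w → G.Adj u w := fun u hu w hw hne =>
    hclique (Finset.mem_coe.mpr hu) (Finset.mem_coe.mpr hw) hne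
  -- basic numeric consequences
  have hT : (0:ℝ) < (μ:ℝ) - m*(m-1) := by linarith
  have hgμ : (μ:ℝ)^2 < ((C.card:ℝ) + m - 1) * ((μ:ℝ) - m*(m-1)) := by
    have h0 : (μ:ℝ)^2 / ((μ:ℝ) - m*(m-1)) < (C.card:ℝ) + m - 1 := by linarith
    calc (μ:ℝ)^2 = ((μ:ℝ)^2 / ((μ:ℝ) - m*(m-1))) * ((μ:ℝ) - m*(m-1)) := by
          field_simp
      _ < ((C.card:ℝ) + m - 1) * ((μ:ℝ) - m*(m-1)) := by
          exact mul_lt_mul_of_pos_right h0 hT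
  have h4m : 4*m*(m-1)*((μ:ℝ) - m*(m-1)) ≤ (μ:ℝ)^2 := by
    nlinarith [sq_nonneg ((μ:ℝ) - 2*m*(m-1))]
  have hcm1 : 4*m*(m-1) < (C.card:ℝ) + m - 1 := by nlinarith
  have hcpos : (0:ℝ) < (C.card:ℝ) := by
    nlinarith [mul_nonneg (by linarith : (0:ℝ) ≤ 4*m-1) (by linarith : (0:ℝ) ≤ m-1)]
  have hc1 : 1 ≤ C.card := by
    have hne : C.card ≠ 0 := by
      intro h
      rw [h] at hcpos
      norm_num at hcpos
    omega
  have hkc : C.card ≤ k := by omega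
  have hB : (1:ℝ) ≤ (k:ℝ) - (C.card:ℝ) + 1 := by
    have : (C.card:ℝ) ≤ (k:ℝ) := by exact_mod_cast hkc
    linarith
  -- the square root
  set D : ℝ := ((C.card:ℝ) + m - 1) * ((C.card:ℝ) - (m-1)*(4*m-1)) with hDdef
  have hD : 0 < D := by
    apply mul_pos (by nlinarith)
    nlinarith
  set s : ℝ := Real.sqrt D with hsdef
  have hs0 : 0 ≤ s := Real.sqrt_nonneg _
  have hs2 : s^2 = D := Real.sq_sqrt hD.le
  -- μ is below the upper root
  have hμs : 2*(μ:ℝ) - ((C.card:ℝ) + m - 1) < s := by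
    nlinarith [hs2, hs0, hgμ]
  -- e(y) ≤ μ for vertices outside with a neighbour inside
  have hemu : ∀ y, y ∉ C → (G.neighborFinset y ∩ C).Nonempty →
      (G.neighborFinset y ∩ C).card ≤ μ := by
    intro y hy hne
    obtain ⟨z, hzC, hnadj⟩ := hmax y hy
    have hyz : y ≠ z := fun h => hy (h ▸ hzC)
    have hsub : G.neighborFinset y ∩ C ⊆ G.neighborFinset y ∩ G.neighborFinset z := by
      intro x hx
      rw [Finset.mem_inter] at hx ⊢
      obtain ⟨hx1, hx2⟩ := hx
      refine ⟨hx1, ?_⟩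
      rw [SimpleGraph.mem_neighborFinset]
      have hxz : x ≠ z := by
        intro h
        rw [SimpleGraph.mem_neighborFinset] at hx1
        exact hnadj (h ▸ hx1)
      exact hadj z hzC x hx2 (Ne.symm hxz)
    rw [← hμ y z hyz hnadj (hne.mono hsub)]
    exact Finset.card_le_card hsub
  -- the per-vertex bound
  have hyb : ∀ y ∈ Cᶜ, ((G.neighborFinset y ∩ C).card : ℝ)
      * (((G.neighborFinset y ∩ C).card : ℝ) - 1)
      ≤ ((((C.card:ℝ) + m - 1 - s)/2) - 1) * ((G.neighborFinset y ∩ C).card : ℝ) := by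
    intro y hy
    have hyC : y ∉ C := Finset.mem_compl.mp hy
    rcases Finset.eq_empty_or_nonempty (G.neighborFinset y ∩ C) with hemp | hne
    · rw [hemp]
      simp
    · have hE1 : (1:ℝ) ≤ ((G.neighborFinset y ∩ C).card : ℝ) := by
        exact_mod_cast Finset.card_pos.mpr hne
      have hEμ : ((G.neighborFinset y ∩ C).card : ℝ) ≤ (μ:ℝ) := by
        exact_mod_cast hemu y hyC hne
      have hKEY := key_ineq G hm hspec hclique hyC
      have hst : 2*((G.neighborFinset y ∩ C).card : ℝ) - ((C.card:ℝ) + m - 1) ≤ -s := by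
        nlinarith [hKEY, hs2, hμs, hEμ]
      nlinarith [hst, hE1]
  -- summed bound
  have hSB : ∑ y ∈ Cᶜ, ((G.neighborFinset y ∩ C).card : ℝ)
        * (((G.neighborFinset y ∩ C).card : ℝ) - 1)
      ≤ ((((C.card:ℝ) + m - 1 - s)/2) - 1)
        * ∑ y ∈ Cᶜ, ((G.neighborFinset y ∩ C).card : ℝ) := by
    rw [Finset.mul_sum]
    exact Finset.sum_le_sum hyb
  -- evaluate the two sums
  have hS1 : ∑ y ∈ Cᶜ, ((G.neighborFinset y ∩ C).card : ℝ)
      = (C.card:ℝ) * ((k:ℝ) - (C.card:ℝ) + 1) := by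
    rw [double_count]
    have hval : ∀ x ∈ C, ((G.neighborFinset x ∩ Cᶜ).card : ℝ)
        = (k:ℝ) - (C.card:ℝ) + 1 := by
      intro x hx
      have hNC : G.neighborFinset x ∩ C = C.erase x := by
        ext z
        simp only [Finset.mem_inter, SimpleGraph.mem_neighborFinset, Finset.mem_erase]
        constructor
        · rintro ⟨ha, hz⟩; exact ⟨(G.ne_of_adj ha).symm, hz⟩
        · rintro ⟨hne, hz⟩; exact ⟨hadj x hx z hz (Ne.symm hne), hz⟩
      have hdiff : G.neighborFinset x ∩ Cᶜ = G.neighborFinset x \ C := by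
        ext z; simp [Finset.mem_sdiff]
      have hsplit : (G.neighborFinset x ∩ C).card + (G.neighborFinset x \ C).card = k := by
        rw [Finset.card_inter_add_card_sdiff]
        exact hreg x
      have hcardNC : ((G.neighborFinset x ∩ C).card : ℝ) = (C.card:ℝ) - 1 := by
        rw [hNC, Finset.card_erase_of_mem hx, Nat.cast_pred (by omega)]
      have : ((G.neighborFinset x ∩ C).card : ℝ) + ((G.neighborFinset x \ C).card : ℝ)
          = (k:ℝ) := by exact_mod_cast hsplit
      rw [hdiff]
      linarith [hcardNC ▸ this]
    rw [Finset.sum_congr rfl hval, Finset.sum_const, nsmul_eq_mul]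
  have hS2 : ∑ y ∈ Cᶜ, ((G.neighborFinset y ∩ C).card : ℝ)
        * (((G.neighborFinset y ∩ C).card : ℝ) - 1)
      = (C.card:ℝ) * ((C.card:ℝ) - 1) * ((lam:ℝ) - (C.card:ℝ) + 2) := by
    rw [Finset.sum_congr rfl (fun y _ => pair_identity G y C)]
    rw [Finset.sum_comm]
    rw [Finset.sum_congr rfl (fun x (_ : x ∈ C) => Finset.sum_comm)]
    have hinner : ∀ x ∈ C, ∑ x' ∈ C.erase x, ∑ y ∈ Cᶜ,
        (if G.Adj y x then (1:ℝ) else 0) * (if G.Adj y x' then (1:ℝ) else 0)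
        = ((C.card:ℝ) - 1) * ((lam:ℝ) - (C.card:ℝ) + 2) := by
      intro x hx
      have hval : ∀ x' ∈ C.erase x, ∑ y ∈ Cᶜ,
          (if G.Adj y x then (1:ℝ) else 0) * (if G.Adj y x' then (1:ℝ) else 0)
          = (lam:ℝ) - (C.card:ℝ) + 2 := by
        intro x' hx'
        obtain ⟨hne', hx'C⟩ := Finset.mem_erase.mp hx'
        have hadjxx' : G.Adj x x' := hadj x hx x' hx'C (Ne.symm hne')
        rw [hcount2]
        set W := G.neighborFinset x ∩ G.neighborFinset x' with hWdef
        have hWcard : W.card = lam := hlam x x' hadjxx'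
        have hWC : W ∩ C = (C.erase x).erase x' := by
          ext z
          simp only [hWdef, Finset.mem_inter, SimpleGraph.mem_neighborFinset,
            Finset.mem_erase]
          constructor
          · rintro ⟨⟨h1, h2⟩, h3⟩
            exact ⟨(G.ne_of_adj h2).symm, (G.ne_of_adj h1).symm, h3⟩
          · rintro ⟨hz1, hz2, hz3⟩
            exact ⟨⟨hadj x hx z hz3 (Ne.symm hz2), hadj x' hx'C z hz3 (Ne.symm hz1)⟩, hz3⟩
        have h2c : 2 ≤ C.card := by
          have h1 := Finset.card_pos.mpr ⟨x', hx'⟩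
          rw [Finset.card_erase_of_mem hx] at h1
          omega
        have hWCcard : ((W ∩ C).card : ℝ) = (C.card:ℝ) - 2 := by
          rw [hWC, Finset.card_erase_of_mem hx', Finset.card_erase_of_mem hx,
            Nat.cast_sub (by omega : 1 ≤ C.card - 1), Nat.cast_sub (by omega : 1 ≤ C.card),
            Nat.cast_one]
          ring
        have hdiff : W ∩ Cᶜ = W \ C := by ext z; simp [Finset.mem_sdiff]
        have hsplit : (W ∩ C).card + (W \ C).card = lam := by
          rw [Finset.card_inter_add_card_sdiff, hWcard]
        have hsplitR : ((W ∩ C).card : ℝ) + ((W \ C).card : ℝ) = (lam:ℝ) := by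
          exact_mod_cast hsplit
        rw [hdiff]
        linarith [hWCcard ▸ hsplitR]
      rw [Finset.sum_congr rfl hval, Finset.sum_const, nsmul_eq_mul,
        Finset.card_erase_of_mem hx, Nat.cast_pred (by omega)]
    rw [Finset.sum_congr rfl hinner, Finset.sum_const, nsmul_eq_mul]
    ring
  -- final arithmetic
  rw [hS1, hS2] at hSB
  have hdiv : ((C.card:ℝ) - 1) * ((lam:ℝ) - (C.card:ℝ) + 2)
      ≤ ((((C.card:ℝ) + m - 1 - s)/2) - 1) * ((k:ℝ) - (C.card:ℝ) + 1) := by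
    nlinarith [hSB, hcpos]
  have hAB : ((k:ℝ) - (C.card:ℝ) + 1) * s
      ≤ ((C.card:ℝ) + m - 3) * ((k:ℝ) - (C.card:ℝ) + 1)
        - 2 * ((C.card:ℝ) - 1) * ((lam:ℝ) - (C.card:ℝ) + 2) := by
    nlinarith [hdiv]
  nlinarith [hAB, hs2, hs0, hB,
    mul_nonneg hs0 (by linarith : (0:ℝ) ≤ (k:ℝ) - (C.card:ℝ) + 1)]
end

section
/- Let Γ be an amply regular graph with parameters (v,k,λ,μ), let x be a vertex and let C̄ be a coclique of order c̄ ≥ 2 contained in Γ(x). Then binom(c̄,2)·(μ-1) ≥ c̄·(λ+1) - k (the claw-bound). -/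
open Finset

/-- The claw-bound (Lemma 4.1): in an amply regular graph with parameters `(v,k,λ,μ)`, if
`C̄` is a coclique of order `c̄ ≥ 2` contained in the neighborhood of a vertex `x`, then
`binom(c̄,2)·(μ-1) ≥ c̄·(λ+1) - k`. -/
theorem claw_bound {V : Type*} [Fintype V] [DecidableEq V]
    (G : SimpleGraph V) [DecidableRel G.Adj] (v k lam μ : ℕ)
    (hv : Fintype.card V = v)
    (hreg : G.IsRegularOfDegree k)
    (hlam : ∀ u w : V, G.Adj u w → (G.neighborFinset u ∩ G.neighborFinset w).card = lam)
    (hμ : ∀ u w : V, u ≠ w → ¬G.Adj u w → (G.neighborFinset u ∩ G.neighborFinset w).Nonempty →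
      (G.neighborFinset u ∩ G.neighborFinset w).card = μ)
    (x : V) (Cbar : Finset V) (hsub : Cbar ⊆ G.neighborFinset x)
    (hindep : (Cbar : Set V).Pairwise fun u w => ¬G.Adj u w)
    (cbar : ℕ) (hcbar : Cbar.card = cbar) (h2 : 2 ≤ cbar) :
    ((cbar : ℤ) * ((cbar : ℤ) - 1) / 2) * ((μ : ℤ) - 1) ≥
      (cbar : ℤ) * ((lam : ℤ) + 1) - (k : ℤ) := by
  classical
  set N := G.neighborFinset x with hN
  set S : V → Finset V := fun y => insert y (G.neighborFinset y ∩ N) with hS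
  have hSsub : ∀ y ∈ Cbar, S y ⊆ N := by
    intro y hy w hw
    simp only [hS, mem_insert, mem_inter] at hw
    rcases hw with rfl | ⟨_, h2'⟩
    · exact hsub hy
    · exact h2'
  have hScard : ∀ y ∈ Cbar, (S y).card = lam + 1 := by
    intro y hy
    have hadj : G.Adj y x := by
      have := hsub hy
      rw [hN, SimpleGraph.mem_neighborFinset] at this
      exact this.symm
    have hnotmem : y ∉ G.neighborFinset y ∩ N := by
      simp [SimpleGraph.mem_neighborFinset]
    simp only [hS]
    rw [card_insert_of_notMem hnotmem, hlam y x hadj]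
  -- common facts for distinct y z in Cbar
  have hxmem : ∀ y ∈ Cbar, ∀ z ∈ Cbar, y ≠ z →
      x ∈ G.neighborFinset y ∩ G.neighborFinset z := by
    intro y hy z hz hyz
    have h1 := hsub hy; have h2' := hsub hz
    rw [hN, SimpleGraph.mem_neighborFinset] at h1 h2'
    simp [SimpleGraph.mem_neighborFinset, h1.symm, h2'.symm]
  have hnadj : ∀ y ∈ Cbar, ∀ z ∈ Cbar, y ≠ z → ¬ G.Adj y z := by
    intro y hy z hz hyz
    exact hindep (by exact_mod_cast hy) (by exact_mod_cast hz) hyz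
  have hmucard : ∀ y ∈ Cbar, ∀ z ∈ Cbar, y ≠ z →
      (G.neighborFinset y ∩ G.neighborFinset z).card = μ := by
    intro y hy z hz hyz
    exact hμ y z hyz (hnadj y hy z hz hyz) ⟨x, hxmem y hy z hz hyz⟩
  have hμ1 : 1 ≤ μ := by
    obtain ⟨y, hy, z, hz, hyz⟩ := Finset.one_lt_card.mp (by omega : 1 < Cbar.card)
    rw [← hmucard y hy z hz hyz]
    exact card_pos.mpr ⟨x, hxmem y hy z hz hyz⟩
  have hC : ∀ y ∈ Cbar, ∀ z ∈ Cbar, y ≠ z → (S y ∩ S z).card ≤ μ - 1 := by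
    intro y hy z hz hyz
    have hsub' : S y ∩ S z ⊆ (G.neighborFinset y ∩ G.neighborFinset z).erase x := by
      intro w hw
      simp only [mem_inter, hS, mem_insert, mem_inter, hN,
        SimpleGraph.mem_neighborFinset] at hw
      rcases hw with ⟨hw1, hw2⟩
      rcases hw1 with rfl | ⟨ha1, ha2⟩
      · rcases hw2 with rfl | ⟨hb1, hb2⟩
        · exact absurd rfl hyz
        · exact absurd hb1.symm (hnadj w hy z hz hyz)
      · rcases hw2 with rfl | ⟨hb1, hb2⟩
        · exact absurd ha1 (hnadj y hy w hz hyz)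
        · refine mem_erase.mpr ⟨fun h => ?_, ?_⟩
          · exact G.loopless.irrefl x (h ▸ ha2)
          · simp [SimpleGraph.mem_neighborFinset, ha1, hb1]
    calc (S y ∩ S z).card ≤ ((G.neighborFinset y ∩ G.neighborFinset z).erase x).card :=
          card_le_card hsub'
      _ = μ - 1 := by
          rw [card_erase_of_mem (hxmem y hy z hz hyz), hmucard y hy z hz hyz]
  -- double counting
  set d : V → ℕ := fun w => (Cbar.filter fun y => w ∈ S y).card with hd
  have hcount : ∀ (T : Finset V), T ⊆ N → (∑ w ∈ N, if w ∈ T then 1 else 0) = T.card := by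
    intro T hT
    rw [← card_filter, filter_mem_eq_inter, inter_eq_right.mpr hT]
  have hsum1 : ∑ w ∈ N, d w = ∑ y ∈ Cbar, (S y).card := by
    simp only [hd, card_filter]
    rw [Finset.sum_comm]
    exact Finset.sum_congr rfl fun y hy => hcount (S y) (hSsub y hy)
  have hsum2 : ∑ w ∈ N, d w * d w = ∑ y ∈ Cbar, ∑ z ∈ Cbar, (S y ∩ S z).card := by
    have : ∀ w, d w * d w = ∑ y ∈ Cbar, ∑ z ∈ Cbar, (if w ∈ S y ∩ S z then 1 else 0) := by
      intro w
      simp only [hd, card_filter]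
      rw [Finset.sum_mul_sum]
      refine Finset.sum_congr rfl fun y _ => Finset.sum_congr rfl fun z _ => ?_
      by_cases h1 : w ∈ S y <;> by_cases h2' : w ∈ S z <;>
        simp [h1, h2', mem_inter]
    simp only [this]
    rw [Finset.sum_comm]
    refine Finset.sum_congr rfl fun y hy => ?_
    rw [Finset.sum_comm]
    refine Finset.sum_congr rfl fun z hz => ?_
    exact hcount _ ((inter_subset_left).trans (hSsub y hy))
  have hsum1' : ∑ w ∈ N, d w = cbar * (lam + 1) := by
    rw [hsum1, Finset.sum_congr rfl hScard, Finset.sum_const, hcbar, smul_eq_mul]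
  have hsum2' : ∑ w ∈ N, d w * d w ≤ cbar * (lam + 1) + cbar * (cbar - 1) * (μ - 1) := by
    rw [hsum2]
    have hrow : ∀ y ∈ Cbar, ∑ z ∈ Cbar, (S y ∩ S z).card ≤ (cbar - 1) * (μ - 1) + (lam + 1) := by
      intro y hy
      rw [← Finset.sum_erase_add _ _ hy]
      gcongr
      · calc ∑ z ∈ Cbar.erase y, (S y ∩ S z).card
            ≤ ∑ z ∈ Cbar.erase y, (μ - 1) := by
              refine Finset.sum_le_sum fun z hz => ?_
              obtain ⟨hzy, hz'⟩ := mem_erase.mp hz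
              exact hC y hy z hz' (Ne.symm hzy)
          _ = (cbar - 1) * (μ - 1) := by
              rw [Finset.sum_const, card_erase_of_mem hy, hcbar, smul_eq_mul]
      · rw [inter_self]; exact (hScard y hy).le
    calc ∑ y ∈ Cbar, ∑ z ∈ Cbar, (S y ∩ S z).card
        ≤ ∑ y ∈ Cbar, ((cbar - 1) * (μ - 1) + (lam + 1)) := Finset.sum_le_sum hrow
      _ = cbar * (lam + 1) + cbar * (cbar - 1) * (μ - 1) := by
          rw [Finset.sum_const, hcbar, smul_eq_mul]; ring
  have hpoint : ∀ w ∈ N, 3 * d w ≤ 2 + d w * d w := by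
    intro w _
    rcases Nat.lt_or_ge (d w) 3 with h | h
    · interval_cases (d w) <;> omega
    · nlinarith
  have hNcard : N.card = k := hreg x
  have key : 2 * (cbar * (lam + 1)) ≤ 2 * k + cbar * (cbar - 1) * (μ - 1) := by
    have h3 : 3 * ∑ w ∈ N, d w ≤ 2 * k + ∑ w ∈ N, d w * d w := by
      calc 3 * ∑ w ∈ N, d w = ∑ w ∈ N, 3 * d w := by rw [Finset.mul_sum]
        _ ≤ ∑ w ∈ N, (2 + d w * d w) := Finset.sum_le_sum hpoint
        _ = 2 * k + ∑ w ∈ N, d w * d w := by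
            rw [Finset.sum_add_distrib, Finset.sum_const, hNcard, smul_eq_mul]
            omega
    rw [hsum1'] at h3
    omega
  -- now finish over ℤ
  have hc1 : 1 ≤ cbar := by omega
  have zkey : 2 * ((cbar : ℤ) * ((lam : ℤ) + 1)) ≤
      2 * (k : ℤ) + (cbar : ℤ) * ((cbar : ℤ) - 1) * ((μ : ℤ) - 1) := by
    zify [hμ1, hc1] at key
    convert key using 2 <;> push_cast <;> ring
  obtain ⟨q, hq⟩ : ∃ q : ℤ, (cbar : ℤ) * ((cbar : ℤ) - 1) = 2 * q := by
    have := Int.even_mul_succ_self ((cbar : ℤ) - 1)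
    rw [show ((cbar:ℤ) - 1) + 1 = (cbar:ℤ) by ring] at this
    obtain ⟨r, hr⟩ := this
    exact ⟨r, by linarith⟩
  have hdiv : (cbar : ℤ) * ((cbar : ℤ) - 1) / 2 = q := by
    rw [hq, Int.mul_ediv_cancel_left _ two_ne_zero]
  rw [ge_iff_le, hdiv]
  rw [hq] at zkey
  nlinarith [zkey]
end

section
/- Let Γ be a strongly regular graph with parameters (v,k,λ,μ) and smallest eigenvalue -m (m ≥ 1 an integer), and suppose C is a Delsarte clique of order 1 + k/m. Then every vertex outside C has exactly μ/m neighbors in C. -/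
open Finset Matrix SimpleGraph

set_option linter.unusedSectionVars false in
/-- swap lemma -/
private lemma aux_swap {V : Type*} [Fintype V] [DecidableEq V] (G : SimpleGraph V)
    [DecidableRel G.Adj] (S : Finset V) (f : V → ℝ) :
    ∑ y, f y * ((S.filter (fun w => G.Adj y w)).card : ℝ)
      = ∑ w ∈ S, ∑ z ∈ G.neighborFinset w, f z := by
  have h1 : ∀ y : V, f y * ((S.filter (fun w => G.Adj y w)).card : ℝ)
      = ∑ w ∈ S, if G.Adj y w then f y else 0 := by
    intro y
    rw [Finset.card_filter]
    push_cast
    rw [Finset.mul_sum]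
    simp [mul_ite]
  simp_rw [h1]
  rw [Finset.sum_comm]
  refine Finset.sum_congr rfl fun w _ => ?_
  rw [neighborFinset_eq_filter, Finset.sum_filter]
  refine Finset.sum_congr rfl fun y _ => ?_
  simp [adj_comm]

/-- common neighbor card as finset inter -/
private lemma aux_common {V : Type*} [Fintype V] [DecidableEq V] (G : SimpleGraph V)
    [DecidableRel G.Adj] (y w : V) :
    (G.neighborFinset y ∩ G.neighborFinset w).card = Fintype.card (G.commonNeighbors y w) := by
  rw [← Set.toFinset_card]
  congr 1
  ext z
  simp [mem_commonNeighbors]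

/-- ℕ-level neighbor-sum of clique-degrees -/
private lemma aux_key3 {V : Type*} [Fintype V] [DecidableEq V] (G : SimpleGraph V)
    [DecidableRel G.Adj] (C : Finset V) (y : V) :
    ∑ z ∈ G.neighborFinset y, (C.filter (fun w => G.Adj z w)).card
      = ∑ w ∈ C, (G.neighborFinset y ∩ G.neighborFinset w).card := by
  simp_rw [Finset.card_filter]
  rw [Finset.sum_comm]
  refine Finset.sum_congr rfl fun w _ => ?_
  have h : G.neighborFinset y ∩ G.neighborFinset w
      = (G.neighborFinset y).filter (fun z => G.Adj z w) := by
    ext z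
    simp only [Finset.mem_inter, Finset.mem_filter, mem_neighborFinset]
    rw [G.adj_comm w z]
  rw [h, Finset.card_filter]

/-- Regularity of Delsarte cliques. -/
theorem delsarte_clique_regular {V : Type*} [Fintype V] [DecidableEq V]
    (G : SimpleGraph V) [DecidableRel G.Adj] (v k lam μ m : ℕ)
    (hm : 1 ≤ m) (hmk : m ∣ k)
    (hsrg : G.IsSRGWith v k lam μ)
    (hspec : IsLeast (spectrum ℝ (G.adjMatrix ℝ)) (-(m : ℝ)))
    (C : Finset V) (hclique : G.IsClique (C : Set V))
    (hcard : C.card = 1 + k / m) :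
    ∀ y ∉ C, ((C.filter (fun z => G.Adj y z)).card : ℕ) * m = μ := by
  -- extract an eigenvector for the eigenvalue `-m`
  obtain ⟨hmem, -⟩ := hspec
  rw [spectrum.mem_iff] at hmem
  have hdet : (algebraMap ℝ (Matrix V V ℝ) (-(m:ℝ)) - G.adjMatrix ℝ).det = 0 := by
    by_contra h
    exact hmem ((Matrix.isUnit_iff_isUnit_det _).mpr (isUnit_iff_ne_zero.mpr h))
  obtain ⟨u, hu, h0⟩ := Matrix.exists_mulVec_eq_zero_iff.mpr hdet
  rw [Matrix.sub_mulVec] at h0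
  have halg : (algebraMap ℝ (Matrix V V ℝ) (-(m:ℝ))) *ᵥ u = (-(m:ℝ)) • u := by
    funext y
    simp [Matrix.algebraMap_eq_diagonal, Matrix.mulVec_diagonal]
  rw [halg] at h0
  have hAu : (G.adjMatrix ℝ) *ᵥ u = (-(m:ℝ)) • u := (sub_eq_zero.mp h0).symm
  have heig : ∀ y, ∑ z ∈ G.neighborFinset y, u z = -(m:ℝ) * u y := by
    intro y
    have h := congrFun hAu y
    rwa [adjMatrix_mulVec_apply, Pi.smul_apply, smul_eq_mul] at h
  have hm1 : (1:ℝ) ≤ (m:ℝ) := by exact_mod_cast hm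
  have hkm0 : ((k:ℝ) + m) ≠ 0 := by positivity
  -- degree facts
  have hdeg : ∀ y : V, ((Finset.univ.filter (fun w => G.Adj y w)).card : ℝ) = k := by
    intro y
    have h : Finset.univ.filter (fun w => G.Adj y w) = G.neighborFinset y :=
      (neighborFinset_eq_filter G (v := y)).symm
    rw [h, card_neighborFinset_eq_degree]
    exact_mod_cast congrArg Nat.cast (hsrg.regular y)
  -- any "eigenfunction" for -m sums to zero
  have hsum0 : ∀ f : V → ℝ, (∀ y, ∑ z ∈ G.neighborFinset y, f z = -(m:ℝ) * f y) →
      ∑ y, f y = 0 := by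
    intro f hf
    have h1 := aux_swap G Finset.univ f
    simp_rw [hdeg, hf] at h1
    rw [← Finset.sum_mul, ← Finset.mul_sum] at h1
    have h2 : (∑ y, f y) * ((k:ℝ) + m) = 0 := by linarith [h1]
    exact (mul_eq_zero.mp h2).resolve_right hkm0
  have hSu : ∑ y, u y = 0 := hsum0 u heig
  -- the quadratic identity for m
  obtain ⟨y₀, hy₀⟩ := Function.ne_iff.mp hu
  have hcompl : ∑ z ∈ Gᶜ.neighborFinset y₀, u z = ((m:ℝ) - 1) * u y₀ := by
    have hsub : Gᶜ.neighborFinset y₀ = (Finset.univ.erase y₀) \ G.neighborFinset y₀ := by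
      ext z
      simp only [mem_neighborFinset, compl_adj, Finset.mem_sdiff, Finset.mem_erase,
        Finset.mem_univ, and_true]
      tauto
    have hsubset : G.neighborFinset y₀ ⊆ Finset.univ.erase y₀ := by
      intro z hz
      rw [mem_neighborFinset] at hz
      exact Finset.mem_erase.mpr ⟨hz.ne', Finset.mem_univ z⟩
    rw [hsub, Finset.sum_sdiff_eq_sub hsubset,
      Finset.sum_erase_eq_sub (Finset.mem_univ y₀), hSu, heig]
    ring
  have hquad : (m:ℝ) * m + lam * m + μ = k + μ * m := by
    have hmat := hsrg.matrix_eq (α := ℝ)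
    have h3 := congrFun (congrArg (fun M => M *ᵥ u) hmat) y₀
    rw [pow_two, ← Matrix.mulVec_mulVec, hAu, Matrix.mulVec_smul, hAu,
      Matrix.add_mulVec, Matrix.add_mulVec] at h3
    rw [show (k • (1 : Matrix V V ℝ)) = ((k:ℝ) • (1 : Matrix V V ℝ)) by
        rw [Nat.cast_smul_eq_nsmul],
      show (lam • G.adjMatrix ℝ) = ((lam:ℝ) • G.adjMatrix ℝ) by rw [Nat.cast_smul_eq_nsmul],
      show (μ • Gᶜ.adjMatrix ℝ) = ((μ:ℝ) • Gᶜ.adjMatrix ℝ) by rw [Nat.cast_smul_eq_nsmul]]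
      at h3
    rw [Matrix.smul_mulVec, Matrix.smul_mulVec, Matrix.smul_mulVec,
      Matrix.one_mulVec, hAu] at h3
    simp only [Pi.add_apply, Pi.smul_apply, smul_eq_mul] at h3
    rw [adjMatrix_mulVec_apply, hcompl] at h3
    have h7 : ((m:ℝ)*m + lam*m + μ) * u y₀ = ((k:ℝ) + μ*m) * u y₀ := by
      linear_combination h3
    exact mul_right_cancel₀ hy₀ h7
  -- basic clique facts
  have hkm : m * (k / m) = k := Nat.mul_div_cancel' hmk
  set E : V → ℝ := fun x => ((C.filter (fun z => G.Adj x z)).card : ℝ) with hE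
  have hCe : ∀ x ∈ C, C.filter (fun z => G.Adj x z) = C.erase x := by
    intro x hx
    ext z
    simp only [Finset.mem_filter, Finset.mem_erase]
    constructor
    · rintro ⟨hzC, hadj⟩
      exact ⟨hadj.ne', hzC⟩
    · rintro ⟨hne, hzC⟩
      exact ⟨hzC, hclique hx hzC (Ne.symm hne)⟩
  have hEC : ∀ x ∈ C, E x * m = k := by
    intro x hx
    have h1 : (C.filter (fun z => G.Adj x z)).card = k / m := by
      rw [hCe x hx, Finset.card_erase_of_mem hx, hcard]
      simp
    rw [hE]
    simp only
    rw [h1]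
    exact_mod_cast congrArg Nat.cast ((k / m).mul_comm m ▸ hkm)
  have hmc : (m:ℝ) * C.card = m + k := by
    have h1 : m * C.card = m + k := by
      rw [hcard, Nat.mul_add, mul_one, hkm]
    exact_mod_cast congrArg Nat.cast h1
  -- the key neighbor-count identity
  have hkey : ∀ x, ∑ z ∈ G.neighborFinset x, E z
      = lam * E x + (if x ∈ C then (k:ℝ) else μ * ((C.card : ℝ) - E x)) := by
    intro x
    have h0 := aux_key3 G C x
    have h0R : ∑ z ∈ G.neighborFinset x, E z
        = ∑ w ∈ C, ((G.neighborFinset x ∩ G.neighborFinset w).card : ℝ) := by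
      rw [hE]
      push_cast
      exact_mod_cast congrArg Nat.cast h0
    rw [h0R, ← Finset.sum_filter_add_sum_filter_not C (fun w => G.Adj x w)]
    have hA : ∑ w ∈ C.filter (fun w => G.Adj x w),
        ((G.neighborFinset x ∩ G.neighborFinset w).card : ℝ) = lam * E x := by
      have hterm : ∀ w ∈ C.filter (fun w => G.Adj x w),
          ((G.neighborFinset x ∩ G.neighborFinset w).card : ℝ) = (lam : ℝ) := by
        intro w hw
        rw [aux_common, hsrg.of_adj x w (Finset.mem_filter.mp hw).2]
      rw [Finset.sum_congr rfl hterm, Finset.sum_const, nsmul_eq_mul, hE, mul_comm]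
    rw [hA]
    by_cases hx : x ∈ C
    · have hone : C.filter (fun w => ¬ G.Adj x w) = {x} := by
        ext w
        simp only [Finset.mem_filter, Finset.mem_singleton]
        constructor
        · rintro ⟨hwC, hnadj⟩
          by_contra hne
          exact hnadj (hclique hx hwC fun h => hne h.symm)
        · intro h
          subst h
          exact ⟨hx, G.irrefl⟩
      rw [hone, Finset.sum_singleton, Finset.inter_self,
        card_neighborFinset_eq_degree, hsrg.regular x]
      simp [hx]
    · have hterm : ∀ w ∈ C.filter (fun w => ¬ G.Adj x w),
          ((G.neighborFinset x ∩ G.neighborFinset w).card : ℝ) = (μ : ℝ) := by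
        intro w hw
        have hw' := Finset.mem_filter.mp hw
        have hne : x ≠ w := fun h => hx (h ▸ hw'.1)
        rw [aux_common, hsrg.of_not_adj hne (fun h => hw'.2 h)]
      rw [Finset.sum_congr rfl hterm, Finset.sum_const, nsmul_eq_mul]
      have hcards : ((C.filter (fun w => ¬ G.Adj x w)).card : ℝ) = (C.card : ℝ) - E x := by
        have hc2 := Finset.card_filter_add_card_filter_not
          (s := C) (p := fun w => G.Adj x w)
        have h2 : ((C.filter (fun w => G.Adj x w)).card : ℝ)
            + ((C.filter (fun w => ¬ G.Adj x w)).card : ℝ) = (C.card : ℝ) := by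
          exact_mod_cast congrArg Nat.cast hc2
        rw [hE]
        simp only
        linarith [h2]
      rw [hcards]
      simp only [hx, if_false]
      ring
  -- the defect vector d
  set d : V → ℝ := fun x => m * E x - (if x ∈ C then (k:ℝ) - μ else 0) - μ with hd
  have hdC : ∀ x ∈ C, d x = 0 := by
    intro x hx
    rw [hd]
    simp only [hx, if_true]
    have := hEC x hx
    linarith
  -- d is an eigenfunction for -m
  have hd_eig : ∀ x, ∑ z ∈ G.neighborFinset x, d z = -(m:ℝ) * d x := by
    intro x
    have hNC : (G.neighborFinset x).filter (fun z => z ∈ C) = C.filter (fun z => G.Adj x z) := by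
      ext z
      simp only [Finset.mem_filter, mem_neighborFinset]
      tauto
    have hsplit : ∑ z ∈ G.neighborFinset x, d z
        = m * (∑ z ∈ G.neighborFinset x, E z) - ((k:ℝ) - μ) * E x - μ * k := by
      rw [hd]
      simp only
      rw [Finset.sum_sub_distrib, Finset.sum_sub_distrib, ← Finset.mul_sum]
      have hite : ∑ z ∈ G.neighborFinset x, (if z ∈ C then (k:ℝ) - μ else 0)
          = ((k:ℝ) - μ) * E x := by
        rw [← Finset.sum_filter, hNC, Finset.sum_const, nsmul_eq_mul, hE, mul_comm]
      have hconst : ∑ _z ∈ G.neighborFinset x, (μ:ℝ) = μ * k := by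
        rw [Finset.sum_const, nsmul_eq_mul, card_neighborFinset_eq_degree, hsrg.regular x]
        ring
      rw [hite, hconst]
    rw [hsplit, hkey x, hd]
    simp only
    by_cases hx : x ∈ C
    · simp only [hx, if_true]
      have h1 := hEC x hx
      linear_combination (E x) * hquad + (μ:ℝ) * h1
    · simp only [hx, if_false]
      linear_combination (E x) * hquad + (μ:ℝ) * hmc
  have hSd : ∑ x, d x = 0 := hsum0 d hd_eig
  -- ⟨d, A d⟩-type identity over the clique
  have hdE : ∑ x, d x * E x = 0 := by
    have h1 := aux_swap G C d
    have h2 : ∀ w ∈ C, ∑ z ∈ G.neighborFinset w, d z = 0 := by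
      intro w hw
      rw [hd_eig w, hdC w hw, mul_zero]
    rw [Finset.sum_congr rfl h2, Finset.sum_const, smul_zero] at h1
    rw [hE]
    simp only
    exact h1
  -- sum of squares of d vanishes
  have hsq : ∑ x, d x ^ 2 = 0 := by
    have hpt : ∀ x : V, d x ^ 2
        = m * (d x * E x) - (if x ∈ C then ((k:ℝ) - μ) * d x else 0) - μ * d x := by
      intro x
      by_cases hx : x ∈ C
      · rw [hdC x hx]
        simp [hx]
      · simp only [hx, if_false]
        rw [hd]
        simp only [hx, if_false]
        ring
    rw [Finset.sum_congr rfl (fun x _ => hpt x), Finset.sum_sub_distrib,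
      Finset.sum_sub_distrib, ← Finset.mul_sum, hdE, ← Finset.mul_sum, hSd]
    have hite : ∑ x : V, (if x ∈ C then ((k:ℝ) - μ) * d x else 0) = 0 := by
      rw [Finset.sum_ite_mem, Finset.univ_inter]
      exact Finset.sum_eq_zero fun x hx => by rw [hdC x hx, mul_zero]
    rw [hite]
    ring
  have hd0 : ∀ x, d x = 0 := by
    intro x
    have h := (Finset.sum_eq_zero_iff_of_nonneg
      (fun i _ => sq_nonneg (d i))).mp hsq x (Finset.mem_univ x)
    exact pow_eq_zero_iff two_ne_zero |>.mp h
  -- conclusion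
  intro y hy
  have h := hd0 y
  rw [hd] at h
  simp only [hy, if_false] at h
  have hEy : ((C.filter (fun z => G.Adj y z)).card : ℝ) * m = μ := by
    have : E y = ((C.filter (fun z => G.Adj y z)).card : ℝ) := by rw [hE]
    rw [← this]
    linarith
  exact_mod_cast hEy
end

section
/- Let Γ be a k-regular graph on v vertices with smallest adjacency eigenvalue -m. Then any coclique in Γ has order at most v·m/(k+m) (the Hoffman bound). -/
open Matrix Pointwise


/-- The Hoffman bound: let `Γ` be a `k`-regular graph on `v` vertices (`k > 0`) with
smallest adjacency eigenvalue `-m` (`m > 0`). Then any coclique of `Γ` has order at most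
`v·m/(k+m)`. -/
theorem hoffman_bound {V : Type*} [Fintype V] [DecidableEq V]
    (G : SimpleGraph V) [DecidableRel G.Adj] (v k : ℕ) (m : ℝ)
    (hv : Fintype.card V = v) (hk : 0 < k) (hm : 0 < m)
    (hreg : G.IsRegularOfDegree k)
    (hspec : IsLeast (spectrum ℝ (G.adjMatrix ℝ)) (-m))
    (s : Finset V) (hindep : (s : Set V).Pairwise fun u w => ¬G.Adj u w) :
    (s.card : ℝ) ≤ (v : ℝ) * m / ((k : ℝ) + m) := by
  classical
  rcases s.eq_empty_or_nonempty with rfl | hs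
  · simp only [Finset.card_empty, Nat.cast_zero]
    positivity
  have hvpos : 0 < v := by
    have : Nonempty V := ⟨hs.choose⟩
    rw [← hv]
    exact Fintype.card_pos
  set A : Matrix V V ℝ := G.adjMatrix ℝ with hA
  have hherm : A.IsHermitian := by
    ext i j
    simp [hA, Matrix.conjTranspose_apply, SimpleGraph.adj_comm]
  set B : Matrix V V ℝ := A + algebraMap ℝ (Matrix V V ℝ) m with hB
  have hhermB : B.IsHermitian := by
    apply hherm.add
    rw [Matrix.algebraMap_eq_diagonal]
    exact Matrix.isHermitian_diagonal _
  have hPSD : B.PosSemidef := by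
    apply hhermB.posSemidef_iff_eigenvalues_nonneg.mpr
    intro i
    show 0 ≤ hhermB.eigenvalues i
    have hmem := hhermB.eigenvalues_mem_spectrum_real i
    have hmem' : hhermB.eigenvalues i ∈ spectrum ℝ A + ({m} : Set ℝ) := by
      rw [spectrum.add_singleton_eq]; exact hmem
    obtain ⟨a, ha, r, hr, hsum⟩ := Set.mem_add.mp hmem'
    have hr' : r = m := by simpa using hr
    have := hspec.2 ha
    rw [← hsum, hr']
    linarith
  -- the test vector
  set α : ℝ := (s.card : ℝ) with hα
  have hαpos : 0 < α := by positivity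
  set c : ℝ := α / v with hc
  set χ : V → ℝ := fun i => if i ∈ s then (1 : ℝ) else 0 with hχ
  set x : V → ℝ := fun i => χ i - c with hx
  have hcv : c * v = α := by
    rw [hc, div_mul_cancel₀]; exact_mod_cast hvpos.ne'
  have hsumχ : ∑ i, χ i = α := by
    simp [hχ, hα, Finset.sum_ite_mem]
  have hsumx : ∑ i, x i = 0 := by
    simp only [hx, Finset.sum_sub_distrib, hsumχ, Finset.sum_const, Finset.card_univ, hv,
      nsmul_eq_mul]
    rw [mul_comm]
    rw [hcv]
    ring
  have hxx : ∑ i, x i * x i = α - c * α := by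
    have : ∀ i, x i * x i = χ i - 2 * c * χ i + c * c := by
      intro i
      simp only [hx, hχ]
      by_cases h : i ∈ s <;> simp [h] <;> ring
    simp only [this, Finset.sum_add_distrib, Finset.sum_sub_distrib, hsumχ, ← Finset.mul_sum,
      Finset.sum_const, Finset.card_univ, hv, nsmul_eq_mul]
    linear_combination c * hcv
  -- neighbor sums of χ
  have hχA : ∀ i ∈ s, ∑ j ∈ G.neighborFinset i, χ j = 0 := by
    intro i hi
    apply Finset.sum_eq_zero
    intro j hj
    rw [SimpleGraph.mem_neighborFinset] at hj
    simp only [hχ, ite_eq_right_iff]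
    intro hjs
    exact ((hindep hi hjs (G.ne_of_adj hj)) hj).elim
  have hsumE : ∑ i, ∑ j ∈ G.neighborFinset i, χ j = k * α := by
    have h1 : ∑ i, ∑ j ∈ G.neighborFinset i, χ j
        = dotProduct (fun _ => (1:ℝ)) (A *ᵥ χ) := by
      simp [dotProduct, hA]
    rw [h1, Matrix.dotProduct_mulVec]
    have h2 : Matrix.vecMul (fun _ => (1:ℝ)) A = fun _ => (k : ℝ) := by
      funext j
      rw [hA, SimpleGraph.adjMatrix_vecMul_apply]
      simp [hreg j]
    rw [h2]
    simp [dotProduct, ← Finset.mul_sum, hsumχ]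
  have hAx : x ⬝ᵥ A *ᵥ x = -(c * (k * α)) := by
    have hAxi : ∀ i, (A *ᵥ x) i = (∑ j ∈ G.neighborFinset i, χ j) - k * c := by
      intro i
      simp only [hA, SimpleGraph.adjMatrix_mulVec_apply, hx, Finset.sum_sub_distrib,
        Finset.sum_const, nsmul_eq_mul, SimpleGraph.card_neighborFinset_eq_degree, hreg i]
    have key : ∀ i, x i * (A *ᵥ x) i
        = -(c * (∑ j ∈ G.neighborFinset i, χ j)) - (k * c) * x i := by
      intro i
      rw [hAxi i]
      by_cases h : i ∈ s
      · rw [hχA i h]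
        simp only [hx, hχ, if_pos h]
        ring
      · have : x i = -c := by simp [hx, hχ, h]
        rw [this]; ring
    calc x ⬝ᵥ A *ᵥ x = ∑ i, x i * (A *ᵥ x) i := rfl
      _ = ∑ i, (-(c * (∑ j ∈ G.neighborFinset i, χ j)) - (k * c) * x i) :=
          Finset.sum_congr rfl fun i _ => key i
      _ = -(c * ∑ i, ∑ j ∈ G.neighborFinset i, χ j) - (k * c) * ∑ i, x i := by
          rw [Finset.sum_sub_distrib, Finset.sum_neg_distrib, ← Finset.mul_sum,
            ← Finset.mul_sum]
      _ = -(c * (k * α)) := by rw [hsumE, hsumx]; ring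
  have hquad : 0 ≤ x ⬝ᵥ B *ᵥ x := by
    have := hPSD.dotProduct_mulVec_nonneg x
    simpa using this
  have hBx : x ⬝ᵥ B *ᵥ x = -(c * (k * α)) + m * (α - c * α) := by
    rw [hB, Matrix.add_mulVec, dotProduct_add, hAx]
    have : (algebraMap ℝ (Matrix V V ℝ) m) *ᵥ x = m • x := by
      rw [Algebra.algebraMap_eq_smul_one, Matrix.smul_mulVec, Matrix.one_mulVec]
    rw [this, dotProduct_smul, smul_eq_mul]
    congr 1
    rw [← hxx]
    simp [dotProduct]
  rw [hBx] at hquad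
  -- conclude by algebra
  have hv' : (0:ℝ) < v := by exact_mod_cast hvpos
  have hvne : (v:ℝ) ≠ 0 := ne_of_gt hv'
  rw [hc] at hquad
  have hq2 : 0 ≤ -(α * (k * α)) + m * (α * v - α * α) := by
    have h := mul_nonneg hquad hv'.le
    have heq : (-(α / ↑v * (↑k * α)) + m * (α - α / ↑v * α)) * ↑v
        = -(α * (↑k * α)) + m * (α * ↑v - α * α) := by
      field_simp
    rwa [heq] at h

  have hkm : (0:ℝ) < (k:ℝ) + m := by positivity
  show α ≤ _
  rw [le_div_iff₀ hkm]
  nlinarith [hq2, hαpos]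
end

section
/- Let Γ be a strongly regular graph with parameters (v,k,λ,μ) whose adjacency matrix has smallest eigenvalue -m. Then any clique in Γ has order at most 1 + k/m (the Delsarte bound). -/
open Matrix SimpleGraph Finset

set_option maxHeartbeats 1600000 in
/-- The Delsarte bound: let `Γ` be a strongly regular graph with parameters `(v,k,λ,μ)`
whose adjacency matrix has smallest eigenvalue `-m` (`m > 0`). Then any clique in `Γ` has
order at most `1 + k/m`. -/
theorem delsarte_bound {V : Type*} [Fintype V] [DecidableEq V]
    (G : SimpleGraph V) [DecidableRel G.Adj] (v k lam μ : ℕ) (m : ℝ) (hm : 0 < m)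
    (hsrg : G.IsSRGWith v k lam μ)
    (hspec : IsLeast (spectrum ℝ (G.adjMatrix ℝ)) (-m))
    (s : Finset V) (hclique : G.IsClique (s : Set V)) :
    (s.card : ℝ) ≤ 1 + (k : ℝ) / m := by
  classical
  set A : Matrix V V ℝ := G.adjMatrix ℝ with hA
  set J : Matrix V V ℝ := Matrix.of (fun _ _ => (1:ℝ)) with hJdef
  -- eigenvector for -m
  have hmem := hspec.1
  rw [← AlgEquiv.spectrum_eq (Matrix.toLinAlgEquiv' (R := ℝ) (n := V)),
    ← Module.End.hasEigenvalue_iff_mem_spectrum] at hmem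
  obtain ⟨u, huv⟩ := hmem.exists_hasEigenvector
  have hu0 : u ≠ 0 := huv.right
  have hu : A *ᵥ u = (-m) • u := by
    simpa [Matrix.toLinAlgEquiv'_apply] using huv.apply_eq_smul
  obtain ⟨i₀, hi₀⟩ : ∃ i, u i ≠ 0 := Function.ne_iff.mp hu0
  -- row and column sums
  have hrow : ∀ i : V, ∑ j, A i j = (k:ℝ) := by
    intro i
    have h1 : ∑ j, A i j = ((G.neighborFinset i).card : ℝ) := by
      simp [hA, SimpleGraph.neighborFinset_eq_filter, Finset.sum_boole]
    rw [h1]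
    norm_cast
    rw [SimpleGraph.card_neighborFinset_eq_degree]
    exact hsrg.regular i
  have hcol : ∀ j : V, ∑ i, A i j = (k:ℝ) := by
    intro j
    rw [← hrow j]
    exact Finset.sum_congr rfl fun i _ => by simp [hA, SimpleGraph.adj_comm]
  -- sum of eigenvector entries is zero
  have hsum : ∑ j, u j = 0 := by
    have h1 : ∑ i, (A *ᵥ u) i = (k:ℝ) * ∑ j, u j := by
      simp only [Matrix.mulVec, dotProduct]
      rw [Finset.sum_comm, Finset.mul_sum]
      exact Finset.sum_congr rfl fun j _ => by rw [← Finset.sum_mul, hcol j]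
    have h2 : ∑ i, (A *ᵥ u) i = -m * ∑ j, u j := by
      rw [hu]; simp [Finset.mul_sum]
    have h3 : ((k:ℝ) + m) * (∑ j, u j) = 0 := by linarith [h1.symm.trans h2]
    have hkm : ((k:ℝ) + m) ≠ 0 := by positivity
    rcases mul_eq_zero.mp h3 with h | h
    · exact absurd h hkm
    · exact h
  have hJu : J *ᵥ u = 0 := by
    ext i
    simp [hJdef, Matrix.mulVec, dotProduct, hsum]
  -- SRG matrix identity over ℝ
  have hcompl : Gᶜ.adjMatrix ℝ = J - 1 - A := by
    ext i j
    by_cases hij : i = j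
    · subst hij; simp [hJdef, hA]
    · by_cases hadj : G.Adj i j <;>
        simp [hJdef, hA, SimpleGraph.compl_adj, hij, hadj, Matrix.one_apply]
  have hH : A * A = ((k:ℝ) - μ) • (1 : Matrix V V ℝ) + ((lam:ℝ) - μ) • A + (μ:ℝ) • J := by
    have h0 := hsrg.matrix_eq (α := ℝ)
    rw [hcompl] at h0
    rw [← sq, h0, ← Nat.cast_smul_eq_nsmul ℝ k, ← Nat.cast_smul_eq_nsmul ℝ lam,
      ← Nat.cast_smul_eq_nsmul ℝ μ]
    module
  -- the eigenvalue equation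
  have hE : m^2 + ((lam:ℝ) - μ) * m + ((μ:ℝ) - k) = 0 := by
    have h1 : (A * A) *ᵥ u = (m^2) • u := by
      rw [← Matrix.mulVec_mulVec, hu, Matrix.mulVec_smul, hu, smul_smul]
      ring_nf
    have h2 : (A * A) *ᵥ u = (((k:ℝ) - μ) + ((lam:ℝ) - μ) * (-m)) • u := by
      rw [hH, Matrix.add_mulVec, Matrix.add_mulVec, Matrix.smul_mulVec,
        Matrix.smul_mulVec, Matrix.smul_mulVec, Matrix.one_mulVec, hu, hJu]
      rw [smul_smul]
      module
    have h4 : (m^2 - (((k:ℝ) - μ) + ((lam:ℝ) - μ) * (-m))) * u i₀ = 0 := by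
      have h3 := congrFun (h1.symm.trans h2) i₀
      simp only [Pi.smul_apply, smul_eq_mul] at h3
      linear_combination h3
    rcases mul_eq_zero.mp h4 with h | h
    · linear_combination h
    · exact absurd h hi₀
  set r : ℝ := (lam:ℝ) - μ + m with hr
  have hrm : r * m = (k:ℝ) - μ := by rw [hr]; linear_combination hE
  by_cases hcomp : ∀ a b : V, a ≠ b → G.Adj a b
  · -- complete graph case
    have hArow : ∀ j, A i₀ j = if j = i₀ then 0 else 1 := by
      intro j
      by_cases hj : j = i₀
      · subst hj; simp [hA]
      · simp [hA, hj, hcomp i₀ j (fun h => hj h.symm)]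
    have hAu : (A *ᵥ u) i₀ = - u i₀ := by
      have he : (A *ᵥ u) i₀ = ∑ j, (if j = i₀ then 0 else u j) := by
        simp only [Matrix.mulVec, dotProduct]
        refine Finset.sum_congr rfl fun j _ => ?_
        rw [hArow j]
        by_cases hj : j = i₀ <;> simp [hj]
      rw [he]
      have h5 : ∑ j, (if j = i₀ then (0:ℝ) else u j) = (∑ j, u j) - u i₀ := by
        have h6 : ∀ j, (if j = i₀ then (0:ℝ) else u j) = u j - (if j = i₀ then u j else 0) := by
          intro j; by_cases hj : j = i₀ <;> simp [hj]
        simp only [h6]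
        rw [Finset.sum_sub_distrib, Finset.sum_ite_eq' Finset.univ i₀ u]
        simp
      rw [h5, hsum]; ring
    have hm1 : m = 1 := by
      have h7 := congrFun hu i₀
      simp only [Pi.smul_apply, smul_eq_mul] at h7
      have h8 : (m - 1) * u i₀ = 0 := by rw [hAu] at h7; linear_combination h7
      rcases mul_eq_zero.mp h8 with h | h
      · linarith
      · exact absurd h hi₀
    have hnb : G.neighborFinset i₀ = Finset.univ.erase i₀ := by
      ext j
      simp only [SimpleGraph.mem_neighborFinset, Finset.mem_erase, Finset.mem_univ, and_true]
      exact ⟨fun h => h.ne', fun h => hcomp i₀ j (fun h' => h h'.symm)⟩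
    have hk : k = Fintype.card V - 1 := by
      have := hsrg.regular i₀
      rw [SimpleGraph.degree, hnb, Finset.card_erase_of_mem (Finset.mem_univ i₀),
        Finset.card_univ] at this
      omega
    have hVpos : 1 ≤ Fintype.card V := Fintype.card_pos_iff.mpr ⟨i₀⟩
    have hcard : s.card ≤ 1 + k := by
      have := Finset.card_le_univ s
      omega
    rw [hm1, div_one]
    exact_mod_cast hcard
  · -- non-complete case
    push_neg at hcomp
    obtain ⟨a, b, hab, hnadj⟩ := hcomp
    have hμk : μ ≤ k := by
      rw [← hsrg.of_not_adj hab hnadj, ← hsrg.regular a]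
      exact G.card_commonNeighbors_le_degree_left a b
    have hμk' : (μ:ℝ) ≤ k := Nat.cast_le.mpr hμk
    have hmr : 0 < m + r := by nlinarith [hrm]
    have hkm : (0:ℝ) < (k:ℝ) + m := by positivity
    -- matrix identities
    have hAJ : A * J = (k:ℝ) • J := by
      ext i j; simp [hJdef, Matrix.mul_apply, hrow i]
    have hJA : J * A = (k:ℝ) • J := by
      ext i j; simp [hJdef, Matrix.mul_apply, hcol j]
    have hJJ : J * J = (Fintype.card V : ℝ) • J := by
      ext i j; simp [hJdef, Matrix.mul_apply, Finset.card_univ]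
    have H1 : (A - r • 1) * (A + m • 1) = (μ:ℝ) • J := by
      have expand : (A - r • 1) * (A + m • 1)
          = A * A + (m - r) • A - (r*m) • (1 : Matrix V V ℝ) := by
        simp only [Matrix.sub_mul, Matrix.mul_add, Matrix.smul_mul, Matrix.mul_smul,
          Matrix.one_mul, Matrix.mul_one, smul_smul]
        module
      rw [expand, hH, hrm]
      match_scalars <;> (try simp only [hr]) <;> ring
    have hones : ∀ (c : ℝ), A *ᵥ (fun _ => c) = fun _ => (k:ℝ) * c := by
      intro c; ext i
      simp only [Matrix.mulVec, dotProduct]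
      rw [← Finset.sum_mul, hrow i]
    have hμn : (μ:ℝ) * (Fintype.card V) = ((k:ℝ) + m) * ((k:ℝ) - r) := by
      have h1 : ((A - r • 1) * (A + m • 1)) *ᵥ (fun _ => (1:ℝ))
          = ((μ:ℝ) • J) *ᵥ (fun _ => (1:ℝ)) := by rw [H1]
      rw [← Matrix.mulVec_mulVec] at h1
      have e1 : (A + m • 1) *ᵥ (fun _ => (1:ℝ)) = fun _ => ((k:ℝ) + m) := by
        rw [Matrix.add_mulVec, Matrix.smul_mulVec, Matrix.one_mulVec, hones 1]
        ext i; simp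
      rw [e1] at h1
      have e2 : (A - r • 1) *ᵥ (fun _ => ((k:ℝ) + m)) = fun _ => ((k:ℝ) - r) * ((k:ℝ) + m) := by
        rw [Matrix.sub_mulVec, Matrix.smul_mulVec, Matrix.one_mulVec, hones]
        ext i; simp; ring
      rw [e2] at h1
      have h2 := congrFun h1 i₀
      simp only [Matrix.smul_mulVec, Pi.smul_apply, smul_eq_mul] at h2
      have h3 : (J *ᵥ (fun _ => (1:ℝ))) i₀ = (Fintype.card V : ℝ) := by
        simp [hJdef, Matrix.mulVec, dotProduct, Finset.card_univ]
      rw [h3] at h2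
      linarith [h2]
    set Q : Matrix V V ℝ := (μ:ℝ) • J - ((k:ℝ) + m) • (A - r • 1) with hQdef
    have hAr1J : (A - r • 1) * J = ((k:ℝ) - r) • J := by
      rw [Matrix.sub_mul, hAJ, Matrix.smul_mul, Matrix.one_mul, ← sub_smul]
    have hJAr1 : J * (A - r • 1) = ((k:ℝ) - r) • J := by
      rw [Matrix.mul_sub, hJA, Matrix.mul_smul, Matrix.mul_one, ← sub_smul]
    have hArAr : (A - r • 1) * (A - r • 1) = (μ:ℝ) • J - (m + r) • (A - r • 1) := by
      have h1 : (A - r • 1) * (A - r • 1)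
          = (A - r • 1) * (A + m • 1) - (m + r) • (A - r • 1) := by
        simp only [Matrix.mul_add, Matrix.mul_sub, Matrix.mul_smul, Matrix.mul_one,
          Matrix.sub_mul, Matrix.smul_mul, Matrix.one_mul]
        module
      rw [h1, H1]
    have hJQ : J * Q = 0 := by
      rw [hQdef, Matrix.mul_sub, Matrix.mul_smul, Matrix.mul_smul, hJJ, hJAr1,
        smul_smul, smul_smul, hμn, mul_comm ((k:ℝ) + m) ((k:ℝ) - r), sub_self]
    have hArQ : (A - r • 1) * Q
        = ((μ:ℝ) * (((k:ℝ) - r) - ((k:ℝ) + m))) • J + (((k:ℝ) + m) * (m + r)) • (A - r • 1) := by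
      rw [hQdef, Matrix.mul_sub, Matrix.mul_smul, Matrix.mul_smul, hAr1J, hArAr]
      match_scalars <;> ring
    have hQQ : Q * Q = (((k:ℝ) + m) * (m + r)) • Q := by
      nth_rewrite 1 [hQdef]
      rw [Matrix.sub_mul, Matrix.smul_mul, Matrix.smul_mul, hJQ, hArQ, hQdef]
      match_scalars <;> ring
    have hQT : Qᵀ = Q := by
      rw [hQdef]
      have hJT : Jᵀ = J := by ext i j; simp [hJdef]
      have hAT : Aᵀ = A := by rw [hA]; exact G.transpose_adjMatrix
      simp [Matrix.transpose_sub, Matrix.transpose_smul, Matrix.transpose_one, hJT, hAT]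
    -- the clique indicator vector
    set c : ℝ := (s.card : ℝ) with hc
    set xv : V → ℝ := fun i => if i ∈ s then 1 else 0 with hxv
    have hsum_x : ∑ j, xv j = c := by simp [hxv, hc]
    have hxx : xv ⬝ᵥ xv = c := by
      simp only [dotProduct, hxv]
      rw [← hsum_x]
      refine Finset.sum_congr rfl fun i _ => ?_
      by_cases hi : i ∈ s <;> simp [hxv, hi]
    have hJx : xv ⬝ᵥ (J *ᵥ xv) = c * c := by
      have h1 : J *ᵥ xv = fun _ => c := by
        ext i; simp [hJdef, Matrix.mulVec, dotProduct, hsum_x]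
      rw [h1]
      simp only [dotProduct]
      rw [← Finset.sum_mul, hsum_x]
    have key : ∀ i ∈ s, (A *ᵥ xv) i = c - 1 := by
      intro i hi
      have h1 : (A *ᵥ xv) i = ∑ j ∈ s, A i j := by
        simp only [Matrix.mulVec, dotProduct, hxv, mul_ite, mul_one, mul_zero]
        rw [Finset.sum_ite_mem, Finset.univ_inter]
      have h2 : ∀ j ∈ s, A i j = 1 - (if j = i then (1:ℝ) else 0) := by
        intro j hj
        by_cases hij : j = i
        · subst hij; simp [hA]
        · have hadj : G.Adj i j :=
            hclique (Finset.mem_coe.mpr hi) (Finset.mem_coe.mpr hj) (fun h => hij h.symm)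
          simp [hA, hadj, hij]
      rw [h1, Finset.sum_congr rfl h2, Finset.sum_sub_distrib, Finset.sum_const,
        Finset.sum_ite_eq' s i (fun _ => (1:ℝ)), if_pos hi]
      simp [hc]
    have hAx : xv ⬝ᵥ (A *ᵥ xv) = c * (c - 1) := by
      simp only [dotProduct, hxv, ite_mul, one_mul, zero_mul]
      rw [Finset.sum_ite_mem, Finset.univ_inter, Finset.sum_congr rfl key,
        Finset.sum_const, nsmul_eq_mul, hc]
    have hdval : xv ⬝ᵥ (Q *ᵥ xv)
        = μ * (c * c) - ((k:ℝ) + m) * (c * (c - 1)) + ((k:ℝ) + m) * r * c := by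
      rw [hQdef, Matrix.sub_mulVec, Matrix.smul_mulVec, Matrix.smul_mulVec,
        Matrix.sub_mulVec, Matrix.smul_mulVec, Matrix.one_mulVec]
      simp only [dotProduct_sub, dotProduct_smul, smul_eq_mul]
      rw [hJx, hAx, hxx]
      ring
    have hdpos : 0 ≤ xv ⬝ᵥ (Q *ᵥ xv) := by
      have hα : 0 < ((k:ℝ) + m) * (m + r) := mul_pos hkm hmr
      have h1 : (((k:ℝ) + m) * (m + r)) * (xv ⬝ᵥ (Q *ᵥ xv)) = (Q *ᵥ xv) ⬝ᵥ (Q *ᵥ xv) := by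
        calc (((k:ℝ) + m) * (m + r)) * (xv ⬝ᵥ (Q *ᵥ xv))
            = xv ⬝ᵥ (((((k:ℝ) + m) * (m + r)) • Q) *ᵥ xv) := by
              rw [Matrix.smul_mulVec, dotProduct_smul, smul_eq_mul]
          _ = xv ⬝ᵥ ((Q * Q) *ᵥ xv) := by rw [hQQ]
          _ = xv ⬝ᵥ (Q *ᵥ (Q *ᵥ xv)) := by rw [Matrix.mulVec_mulVec]
          _ = (xv ᵥ* Q) ⬝ᵥ (Q *ᵥ xv) := by rw [Matrix.dotProduct_mulVec]
          _ = (Q *ᵥ xv) ⬝ᵥ (Q *ᵥ xv) := by rw [← hQT, Matrix.vecMul_transpose, hQT]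
      have h2 : 0 ≤ (Q *ᵥ xv) ⬝ᵥ (Q *ᵥ xv) :=
        Finset.sum_nonneg fun i _ => mul_self_nonneg _
      nlinarith [h1, h2, hα]
    rcases Nat.eq_zero_or_pos s.card with h0 | hpos1
    · rw [hc, h0]; push_cast; positivity
    · have hc1 : (1:ℝ) ≤ c := by rw [hc]; exact_mod_cast hpos1
      rw [hdval] at hdpos
      have keyeq : (c * m - m - k) * (c * (((k:ℝ) + m) - μ))
          = -(m * (μ * (c * c) - ((k:ℝ) + m) * (c * (c - 1)) + ((k:ℝ) + m) * r * c)) := by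
        linear_combination (c * ((k:ℝ) + m)) * hrm
      have hp : 0 < c * (((k:ℝ) + m) - μ) :=
        mul_pos (by linarith) (by linarith)
      have hD : c * m - m - k ≤ 0 := by
        nlinarith [keyeq, mul_nonneg hm.le hdpos, hp]
      have h9 : c - 1 ≤ (k:ℝ) / m := (le_div_iff₀ hm).mpr (by linarith)
      linarith
end
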